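/- arXiv:2002.00172 — 2 statements merged into one kernel-verified Lean document; each statement's English description precedes it below -/
import Mathlib

section
/- For every positive integer n, every 0 ≤ h ≤ 2n, every Y ∈ 𝓡_{2n} and every B ∈ 𝓡_{2n}^h, one has 𝒢(Y, B) = 𝒢(Y^{∧_h}, B^{∨_h}). -/
open MeasureTheory Filter Matrix

noncomputable section

instance matrixMeasurableSpace {a b : ℕ} {α : Type*} [MeasurableSpace α] :
    MeasurableSpace (Matrix (Fin a) (Fin b) α) :=
  inferInstanceAs (MeasurableSpace (Fin a → Fin b → α))

/-- The ambient arithmetic setting of the paper: `E` is (the underlying field of) the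
unramified quadratic extension `E_v` of an unramified finite extension `F_v` of `ℚ_p`
(`p` an odd prime); `σ` is the nontrivial Galois automorphism of `E_v/F_v` (so `F_v` is
its fixed field), `ϖ` a uniformizer lying in `F_v` (i.e. fixed by `σ`; it stays a
uniformizer in `E_v` since the extension is unramified), `v` the normalized discrete
valuation of `E_v` (so `v ϖ = 1` and also `v p = 1`, expressing that `F_v/ℚ_p` is
unramified), `q` the residue cardinality of `F_v` (a power of `p`; the residue field of
`E_v` then has `q ^ 2` elements, which is encoded in the scaling behaviour of the Haar
measure `μ`), `μ` the additive Haar measure of `E_v` normalized by `μ O_{E_v} = 1`,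
`ψ` the standard additive character of `F_v` (trivial on `O_{F_v}`, nontrivial on
`ϖ⁻¹ O_{F_v}`), and `μV k` the Haar measure on the space `V_k(E_v)` of `k × k`
hermitian matrices, normalized by `μV (V_k(O_{E_v})) = 1`. -/
class KRSetting (E : Type) extends Field E, MeasurableSpace E where
  p : ℕ
  q : ℕ
  pPrime : p.Prime
  pOdd : p ≠ 2
  q_pow : ∃ k : ℕ, 0 < k ∧ q = p ^ k
  charZ : CharZero E
  σ : E →+* E
  σ_invol : Function.Involutive σ
  σ_ne_id : σ ≠ RingHom.id E
  ϖ : E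
  ϖ_ne : ϖ ≠ 0
  σ_ϖ : σ ϖ = ϖ
  v : E → ℤ
  v_mul : ∀ x y : E, x ≠ 0 → y ≠ 0 → v (x * y) = v x + v y
  v_add : ∀ x y : E, x ≠ 0 → y ≠ 0 → x + y ≠ 0 → min (v x) (v y) ≤ v (x + y)
  v_ϖ : v ϖ = 1
  v_p : v (p : E) = 1
  v_surj : ∀ k : ℤ, ∃ x : E, x ≠ 0 ∧ v x = k
  v_σ : ∀ x : E, x ≠ 0 → v (σ x) = v x
  μ : MeasureTheory.Measure E
  μ_sfin : MeasureTheory.SigmaFinite μ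
  μ_trans : ∀ a : E, μ.map (fun x => a + x) = μ
  μ_O : μ {x : E | x = 0 ∨ 0 ≤ v x} = 1
  μ_scale : ∀ a : E, a ≠ 0 → μ.map (fun x => a * x) = ((q : ENNReal) ^ (2 * v a)) • μ
  ψ : E → ℂ
  ψ_add : ∀ x y : E, ψ (x + y) = ψ x * ψ y
  ψ_triv : ∀ x : E, (x = 0 ∨ 0 ≤ v x) → σ x = x → ψ x = 1
  ψ_nontriv : ∃ x : E, σ x = x ∧ (ϖ * x = 0 ∨ 0 ≤ v (ϖ * x)) ∧ ψ x ≠ 1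
  μV : (k : ℕ) → MeasureTheory.Measure (Matrix (Fin k) (Fin k) E)
  μV_sfin : ∀ k : ℕ, MeasureTheory.SigmaFinite (μV k)
  μV_supp : ∀ k : ℕ, μV k {Y : Matrix (Fin k) (Fin k) E | ¬ ∀ i j, σ (Y j i) = Y i j} = 0
  μV_trans : ∀ (k : ℕ) (A : Matrix (Fin k) (Fin k) E),
    (∀ i j, σ (A j i) = A i j) → (μV k).map (fun Y => A + Y) = μV k
  μV_O : ∀ k : ℕ, μV k {Y : Matrix (Fin k) (Fin k) E |
    (∀ i j, σ (Y j i) = Y i j) ∧ ∀ i j, Y i j = 0 ∨ 0 ≤ v (Y i j)} = 1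

namespace KR

variable {E : Type} [KRSetting E]

instance : CharZero E := KRSetting.charZ

instance : MeasureTheory.SigmaFinite (KRSetting.μ (E := E)) := KRSetting.μ_sfin

instance (k : ℕ) : MeasureTheory.SigmaFinite (KRSetting.μV (E := E) k) := KRSetting.μV_sfin k

/-- The residue cardinality `q` of `F_v`. -/
abbrev qq (E : Type) [KRSetting E] : ℕ := KRSetting.q (E := E)

/-- The fixed uniformizer `π` of `F_v` (and of `E_v`). -/
abbrev uf (E : Type) [KRSetting E] : E := KRSetting.ϖ

/-- The nontrivial Galois conjugation `x ↦ x*` of `E_v / F_v`. -/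
abbrev cj (x : E) : E := KRSetting.σ (E := E) x

/-- The additive character `ψ_v`. -/
abbrev ch (x : E) : ℂ := KRSetting.ψ x

/-- `x ∈ O_{E_v}`. -/
def inO (x : E) : Prop := x = 0 ∨ 0 ≤ KRSetting.v x

/-- The ring of integers `O_{E_v}` as a subring of `E_v`. -/
def Oring (E : Type) [KRSetting E] : Subring E where
  carrier := {x : E | inO x}
  zero_mem' := Or.inl rfl
  one_mem' := by
    have h := KRSetting.v_mul (1 : E) 1 one_ne_zero one_ne_zero
    rw [one_mul] at h
    exact Or.inr (by omega)
  add_mem' := by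
    intro a b ha hb
    have ha' : a = 0 ∨ 0 ≤ KRSetting.v a := ha
    have hb' : b = 0 ∨ 0 ≤ KRSetting.v b := hb
    show a + b = 0 ∨ 0 ≤ KRSetting.v (a + b)
    by_cases ha0 : a = 0
    · subst ha0; simpa using hb'
    by_cases hb0 : b = 0
    · subst hb0; simpa using ha'
    by_cases hab : a + b = 0
    · exact Or.inl hab
    have hva : 0 ≤ KRSetting.v a := ha'.resolve_left ha0
    have hvb : 0 ≤ KRSetting.v b := hb'.resolve_left hb0
    exact Or.inr (le_trans (le_min hva hvb) (KRSetting.v_add a b ha0 hb0 hab))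
  mul_mem' := by
    intro a b ha hb
    have ha' : a = 0 ∨ 0 ≤ KRSetting.v a := ha
    have hb' : b = 0 ∨ 0 ≤ KRSetting.v b := hb
    show a * b = 0 ∨ 0 ≤ KRSetting.v (a * b)
    by_cases ha0 : a = 0
    · exact Or.inl (by rw [ha0, zero_mul])
    by_cases hb0 : b = 0
    · exact Or.inl (by rw [hb0, mul_zero])
    have hva : 0 ≤ KRSetting.v a := ha'.resolve_left ha0
    have hvb : 0 ≤ KRSetting.v b := hb'.resolve_left hb0
    refine Or.inr ?_
    rw [KRSetting.v_mul a b ha0 hb0]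
    omega
  neg_mem' := by
    intro a ha
    have ha' : a = 0 ∨ 0 ≤ KRSetting.v a := ha
    show -a = 0 ∨ 0 ≤ KRSetting.v (-a)
    by_cases ha0 : a = 0
    · exact Or.inl (by rw [ha0, neg_zero])
    have hva : 0 ≤ KRSetting.v a := ha'.resolve_left ha0
    have hm1 : (-1 : E) ≠ 0 := neg_ne_zero.mpr one_ne_zero
    have h1 : KRSetting.v (1 : E) = 0 := by
      have h := KRSetting.v_mul (1 : E) 1 one_ne_zero one_ne_zero
      rw [one_mul] at h; omega
    have hneg1 : KRSetting.v (-1 : E) = 0 := by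
      have h := KRSetting.v_mul (-1 : E) (-1) hm1 hm1
      rw [neg_mul_neg, one_mul, h1] at h; omega
    refine Or.inr ?_
    have : (-a : E) = -1 * a := by ring
    rw [this, KRSetting.v_mul (-1 : E) a hm1 ha0, hneg1]
    omega

/-- The ring of integers `O_{E_v}` as a type. -/
abbrev OC (E : Type) [KRSetting E] : Type := ↥(Oring E)

/-- Conjugate transpose `X ↦ ᵗX*` of a matrix over `E_v`. -/
def ctrans {a b : ℕ} (A : Matrix (Fin a) (Fin b) E) : Matrix (Fin b) (Fin a) E :=
  fun i j => cj (A j i)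

/-- A matrix is hermitian: `ᵗA* = A`. -/
def isHerm {k : ℕ} (A : Matrix (Fin k) (Fin k) E) : Prop := ∀ i j, cj (A j i) = A i j

/-- `A ∈ X_k(E_v)`: hermitian and invertible. -/
def inX {k : ℕ} (A : Matrix (Fin k) (Fin k) E) : Prop := isHerm A ∧ A.det ≠ 0

/-- All entries of `A` are integral. -/
def intMat {a b : ℕ} (A : Matrix (Fin a) (Fin b) E) : Prop := ∀ i j, inO (A i j)

/-- `A[X] = ᵗX* A X`. -/
def brk {a b : ℕ} (A : Matrix (Fin a) (Fin a) E) (X : Matrix (Fin a) (Fin b) E) :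
    Matrix (Fin b) (Fin b) E := ctrans X * A * X

/-- `⟨A, B⟩ = Tr (A B)`. -/
def trPair {k : ℕ} (A B : Matrix (Fin k) (Fin k) E) : E := (A * B).trace

/-- `GL_k(O_{E_v})` (as a set of matrices over `E_v`). -/
def GLO (E : Type) [KRSetting E] (k : ℕ) : Set (Matrix (Fin k) (Fin k) E) :=
  {g | intMat g ∧ g.det ≠ 0 ∧ inO (g.det)⁻¹}

/-- The Iwahori subgroup `Γ_k ⊆ GL_k(O_{E_v})`. -/
def Iwahori (E : Type) [KRSetting E] (k : ℕ) : Set (Matrix (Fin k) (Fin k) E) :=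
  {γ | intMat γ ∧ (∀ i j : Fin k, (j : ℕ) < (i : ℕ) → inO (γ i j / uf E)) ∧
    γ.det ≠ 0 ∧ inO (γ.det)⁻¹}

/-- Product Haar measure on `a × b` matrices over `E_v`; the integral matrices get mass `1`. -/
def matmu (E : Type) [KRSetting E] (a b : ℕ) : Measure (Matrix (Fin a) (Fin b) E) :=
  Measure.pi fun _ : Fin a => Measure.pi fun _ : Fin b => KRSetting.μ

/-- The matrix `A_t^{[r]} = diag(1_{2n-t}, π⁻¹ 1_t, 1_{2r})`. -/
def Amat (E : Type) [KRSetting E] (n t r : ℕ) :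
    Matrix (Fin (2*n + 2*r)) (Fin (2*n + 2*r)) E :=
  Matrix.diagonal fun i => if 2*n - t ≤ (i : ℕ) ∧ (i : ℕ) < 2*n then (uf E)⁻¹ else 1

/-- The support of the characteristic function `1_{h,t}^{[r]}`: the top `2n × 2n` block,
written `(A B; C D)` with `A ∈ M_{2n-t,2n-h}`, `B ∈ M_{2n-t,h}`, `C ∈ M_{t,2n-h}`,
`D ∈ M_{t,h}`, has `A, B, D` integral and `C ≡ 0 (mod π)`; the bottom `2r × 2n` block is
integral. -/
def SuppSet (E : Type) [KRSetting E] (n h t r : ℕ) :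
    Set (Matrix (Fin (2*n + 2*r)) (Fin (2*n)) E) :=
  {X | (∀ i j, inO (X i j)) ∧
    ∀ (i : Fin (2*n + 2*r)) (j : Fin (2*n)),
      2*n - t ≤ (i : ℕ) → (i : ℕ) < 2*n → (j : ℕ) < 2*n - h → inO (X i j / uf E)}

/-- The weighted representation density integral
`W_{h,t}(B, r) = ∫_{V_{2n}(E_v)} ∫ ψ_v(⟨Y, A_t^{[r]}[X] - B⟩) 1_{h,t}^{[r]}(X) dX dY`. -/
def Wfun (E : Type) [KRSetting E] (n h t : ℕ) (B : Matrix (Fin (2*n)) (Fin (2*n)) E)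
    (r : ℕ) : ℂ :=
  ∫ Y : Matrix (Fin (2*n)) (Fin (2*n)) E,
    (∫ X in SuppSet E n h t r, ch (trPair Y (brk (Amat E n t r) X - B))
      ∂(matmu E (2*n + 2*r) (2*n))) ∂(KRSetting.μV (2*n))

/-- `𝒢(Y, B) = ∫_{Γ_{2n}} ψ_v(⟨Y, -B[γ]⟩) dγ`. -/
def Gfun (E : Type) [KRSetting E] (n : ℕ) (Y B : Matrix (Fin (2*n)) (Fin (2*n)) E) : ℂ :=
  ∫ γ in Iwahori E (2*n), ch (trPair Y (-(brk B γ))) ∂(matmu E (2*n) (2*n))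

/-- `𝓕_h(Y, A_t^{[r]}) = ∫ ψ_v(⟨Y, A_t^{[r]}[X]⟩) 1_{h,t}^{[r]}(X) dX`. -/
def Ffun (E : Type) [KRSetting E] (n h t r : ℕ) (Y : Matrix (Fin (2*n)) (Fin (2*n)) E) : ℂ :=
  ∫ X in SuppSet E n h t r, ch (trPair Y (brk (Amat E n t r) X))
    ∂(matmu E (2*n + 2*r) (2*n))

/-- Entrywise congruence `A ≡ B (mod π^d)`. -/
def congMod (E : Type) [KRSetting E] (d : ℕ) {a b : ℕ}
    (A B : Matrix (Fin a) (Fin b) E) : Prop :=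
  ∀ i j, inO ((A i j - B i j) / (uf E) ^ d)

/-- `N_d(Y; Γ_{2n}) = |{γ ∈ Γ_{2n} mod π^d : γ ⬝ Y ≡ Y mod π^d}|` (counting the classes
mod `π^d` of Iwahori matrices `γ` with `γ Y ᵗγ* ≡ Y (mod π^d)`). -/
def Ncount (E : Type) [KRSetting E] (n d : ℕ) (Y : Matrix (Fin (2*n)) (Fin (2*n)) E) : ℕ :=
  Nat.card ((fun γ => Quot.mk (congMod E d) γ) ''
    {γ : Matrix (Fin (2*n)) (Fin (2*n)) E |
      γ ∈ Iwahori E (2*n) ∧ congMod E d (γ * Y * ctrans γ) Y})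

/-- `α(Y; Γ_{2n}) = lim_{d → ∞} q^{-4dn²} N_d(Y; Γ_{2n})`. -/
def alphaIw (E : Type) [KRSetting E] (n : ℕ) (Y : Matrix (Fin (2*n)) (Fin (2*n)) E) : ℝ :=
  limUnder Filter.atTop fun d : ℕ =>
    ((qq E : ℝ) ^ (-(4 * (d : ℤ) * (n : ℤ) ^ 2))) * (Ncount E n d Y : ℝ)

open Classical in
/-- `W'_{h,t}(B, 0)`: minus the derivative at `x = 1` of the polynomial in
`x = (-q)^{-2r}` whose values are `W_{h,t}(B, r)`. -/
def Wderiv (E : Type) [KRSetting E] (n h t : ℕ)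
    (B : Matrix (Fin (2*n)) (Fin (2*n)) E) : ℂ :=
  if hP : ∃ P : Polynomial ℂ, ∀ r : ℕ,
      P.eval (((-(qq E : ℂ)) ^ (2 * r))⁻¹) = Wfun E n h t B r then
    -(Polynomial.derivative hP.choose).eval 1
  else 0

open Classical in
/-- `𝓕'_h(Y, A_t^{[0]})`: minus the derivative at `x = 1` of the polynomial in
`x = (-q)^{-2r}` whose values are `𝓕_h(Y, A_t^{[r]})`. -/
def Fderiv (E : Type) [KRSetting E] (n h t : ℕ)
    (Y : Matrix (Fin (2*n)) (Fin (2*n)) E) : ℂ :=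
  if hP : ∃ P : Polynomial ℂ, ∀ r : ℕ,
      P.eval (((-(qq E : ℂ)) ^ (2 * r))⁻¹) = Ffun E n h t r Y then
    -(Polynomial.derivative hP.choose).eval 1
  else 0

/-- `|𝓐_d(A, B)|`: the number of `x ∈ M_{m,k}(O_{E_v}/π^d)` with `A[x] ≡ B (mod π^d)`. -/
def repCount (E : Type) [KRSetting E] (d : ℕ) {m k : ℕ} (A : Matrix (Fin m) (Fin m) E)
    (B : Matrix (Fin k) (Fin k) E) : ℕ :=
  Nat.card ((fun x => Quot.mk (congMod E d) x) ''
    {x : Matrix (Fin m) (Fin k) E | intMat x ∧ congMod E d (brk A x) B})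

/-- The representation density `α(A, B) = lim_{d→∞} (q^{-d})^{k(2m-k)} |𝓐_d(A,B)|`. -/
def repDen (E : Type) [KRSetting E] {m k : ℕ} (A : Matrix (Fin m) (Fin m) E)
    (B : Matrix (Fin k) (Fin k) E) : ℝ :=
  limUnder Filter.atTop fun d : ℕ =>
    ((qq E : ℝ) ^ (-((d : ℤ) * ((k : ℤ) * (2 * (m : ℤ) - (k : ℤ)))))) * (repCount E d A B : ℝ)

/-- The block diagonal matrix `diag(A, B)` of size `c = a + b`. -/
def bdiag {a b : ℕ} (A : Matrix (Fin a) (Fin a) E) (B : Matrix (Fin b) (Fin b) E)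
    (c : ℕ) (hc : c = a + b) : Matrix (Fin c) (Fin c) E :=
  fun i j =>
    if hi : (i : ℕ) < a then
      (if hj : (j : ℕ) < a then A ⟨i, hi⟩ ⟨j, hj⟩ else 0)
    else
      if hj : (j : ℕ) < a then 0
      else B ⟨(i : ℕ) - a, by have := i.isLt; omega⟩ ⟨(j : ℕ) - a, by have := j.isLt; omega⟩

/-- `diag(A, 1_{2r})`. -/
def extendOne (E : Type) [KRSetting E] {m : ℕ} (A : Matrix (Fin m) (Fin m) E) (r : ℕ) :
    Matrix (Fin (m + 2*r)) (Fin (m + 2*r)) E :=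
  bdiag A (1 : Matrix (Fin (2*r)) (Fin (2*r)) E) (m + 2*r) rfl

open Classical in
/-- The derivative `α'(A, B)` of the representation density (Kudla–Rapoport
normalization): the derivative at `X = 1` of the polynomial `F` in `X = (-q)^{-r}` with
`F((-q)^{-r}) = α(diag(A, 1_{2r}), B)` for all `r ≥ 0`. -/
def repDenD (E : Type) [KRSetting E] {m k : ℕ} (A : Matrix (Fin m) (Fin m) E)
    (B : Matrix (Fin k) (Fin k) E) : ℝ :=
  if hP : ∃ P : Polynomial ℝ, ∀ r : ℕ,
      P.eval (((-(qq E : ℝ)) ^ r)⁻¹) = repDen E (extendOne E A r) B then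
    (Polynomial.derivative hP.choose).eval 1
  else 0

/-- `Y_{σ,e} = σ ⬝ diag(π^{e_1}, …, π^{e_k})`. -/
def Ymat (E : Type) [KRSetting E] {k : ℕ} (σp : Equiv.Perm (Fin k)) (e : Fin k → ℤ) :
    Matrix (Fin k) (Fin k) E :=
  fun i j => if σp j = i then (uf E) ^ (e j) else 0

/-- The index rotation underlying the `∨_h` and `∧_h` operations. -/
def rot (n h : ℕ) (i : Fin (2*n)) : Fin (2*n) :=
  ⟨((i : ℕ) + (2*n - h)) % (2*n), Nat.mod_lt _ i.pos⟩

/-- `X^{∨_h} = (π D, C; B, π⁻¹ A)` for `X = (A B; C D)` with `A` of size `(2n-h)²`. -/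
def veeMat (E : Type) [KRSetting E] (n h : ℕ) (X : Matrix (Fin (2*n)) (Fin (2*n)) E) :
    Matrix (Fin (2*n)) (Fin (2*n)) E :=
  fun i j =>
    (if (i : ℕ) < h ∧ (j : ℕ) < h then uf E
     else if h ≤ (i : ℕ) ∧ h ≤ (j : ℕ) then (uf E)⁻¹ else 1) * X (rot n h i) (rot n h j)

/-- `X^{∧_h} = (π⁻¹ D, C; B, π A)` for `X = (A B; C D)` with `A` of size `(2n-h)²`. -/
def wedgeMat (E : Type) [KRSetting E] (n h : ℕ) (X : Matrix (Fin (2*n)) (Fin (2*n)) E) :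
    Matrix (Fin (2*n)) (Fin (2*n)) E :=
  fun i j =>
    (if (i : ℕ) < h ∧ (j : ℕ) < h then (uf E)⁻¹
     else if h ≤ (i : ℕ) ∧ h ≤ (j : ℕ) then uf E else 1) * X (rot n h i) (rot n h j)

/-- The shape (3.0.1) of the permutations `τ` occurring in `𝓡_{2n}^h`
(stated with `1`-based indices in the paper, `0`-based here). -/
def specialPerm (n h s : ℕ) (τ : Equiv.Perm (Fin (2*n))) : Prop :=
  ∀ i : Fin (2*n),
    ((τ i : ℕ) =
      if (i : ℕ) < 2*n - h - s then (i : ℕ)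
      else if (i : ℕ) < 2*n - h then (i : ℕ) + h
      else if (i : ℕ) < 2*n - s then (i : ℕ)
      else (i : ℕ) - h)

/-- `A_1^h(Y) = {j ≤ 2n - h : σ(j) = j}` (0-based). -/
def setA1 (n h : ℕ) (σp : Equiv.Perm (Fin (2*n))) : Finset (Fin (2*n)) :=
  Finset.univ.filter fun j => (j : ℕ) < 2*n - h ∧ σp j = j

/-- `A_2^h(Y) = {j ≤ 2n - h : σ(j) ≠ j, σ(j) ≤ 2n - h}` (0-based). -/
def setA2 (n h : ℕ) (σp : Equiv.Perm (Fin (2*n))) : Finset (Fin (2*n)) :=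
  Finset.univ.filter fun j => (j : ℕ) < 2*n - h ∧ σp j ≠ j ∧ (σp j : ℕ) < 2*n - h

/-- `B_1^h(Y) = {j ≤ 2n - h : σ(j) ≥ 2n - h + 1}` (0-based). -/
def setB1 (n h : ℕ) (σp : Equiv.Perm (Fin (2*n))) : Finset (Fin (2*n)) :=
  Finset.univ.filter fun j => (j : ℕ) < 2*n - h ∧ 2*n - h ≤ (σp j : ℕ)

/-- `C_1^h(Y) = {j ≥ 2n - h + 1 : σ(j) = j}` (0-based). -/
def setC1 (n h : ℕ) (σp : Equiv.Perm (Fin (2*n))) : Finset (Fin (2*n)) :=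
  Finset.univ.filter fun j => 2*n - h ≤ (j : ℕ) ∧ σp j = j

/-- `C_2^h(Y) = {j ≥ 2n - h + 1 : σ(j) ≠ j, σ(j) ≥ 2n - h + 1}` (0-based). -/
def setC2 (n h : ℕ) (σp : Equiv.Perm (Fin (2*n))) : Finset (Fin (2*n)) :=
  Finset.univ.filter fun j => 2*n - h ≤ (j : ℕ) ∧ σp j ≠ j ∧ 2*n - h ≤ (σp j : ℕ)

/-- `𝔄(Y) = |{j ∈ A_1^h(Y) ∪ A_2^h(Y) : e_j ≤ -1}|`. -/
def frakA (n h : ℕ) (σp : Equiv.Perm (Fin (2*n))) (e : Fin (2*n) → ℤ) : ℕ :=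
  ((setA1 n h σp ∪ setA2 n h σp).filter fun j => e j ≤ -1).card

/-- `ℭ(Y) = |{j ∈ C_1^h(Y) ∪ C_2^h(Y) : e_j ≤ 0}|`. -/
def frakC (n h : ℕ) (σp : Equiv.Perm (Fin (2*n))) (e : Fin (2*n) → ℤ) : ℕ :=
  ((setC1 n h σp ∪ setC2 n h σp).filter fun j => e j ≤ 0).card

/-- The auxiliary product `f_h(Y)` of Lemma 3.13. -/
def fh (E : Type) [KRSetting E] (n h : ℕ) (σp : Equiv.Perm (Fin (2*n)))
    (e : Fin (2*n) → ℤ) : ℂ :=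
  (∏ j ∈ setA1 n h σp,
      (-(qq E : ℂ)) ^ ((n : ℤ) * min 0 (e j) + (n : ℤ) * min 0 (e j + 1))) *
  (∏ j ∈ (setA2 n h σp).filter (fun j => j < σp j),
      (-(qq E : ℂ)) ^ (2 * (n : ℤ) * min 0 (e j) + 2 * (n : ℤ) * min 0 (e j + 1))) *
  (∏ j ∈ setB1 n h σp,
      (-(qq E : ℂ)) ^ (4 * (n : ℤ) * min 0 (e j))) *
  (∏ j ∈ setC1 n h σp,
      (-(qq E : ℂ)) ^ ((n : ℤ) * min 0 (e j) + (n : ℤ) * min 0 (e j - 1))) *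
  (∏ j ∈ (setC2 n h σp).filter (fun j => j < σp j),
      (-(qq E : ℂ)) ^ (2 * (n : ℤ) * min 0 (e j) + 2 * (n : ℤ) * min 0 (e j - 1)))

/-- The function `𝓙_n^n` attached to a family `β` of correction constants. -/
def Jfun (E : Type) [KRSetting E] (n : ℕ) (β : Fin n → ℂ)
    (B : Matrix (Fin (2*n)) (Fin (2*n)) E) : ℂ :=
  (Wfun E n n n (Amat E n n 0) 0)⁻¹ *
    (Wderiv E n n n B - ∑ i : Fin n, β i * Wfun E n n (i : ℕ) B 0)

/-- The hermitian pairing on `E_v^m` with Gram matrix `G`: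
`⟨x, y⟩ = ∑ x_i G_{ij} (y_j)*` (linear in the first variable). -/
def gramV (E : Type) [KRSetting E] {m : ℕ} (G : Matrix (Fin m) (Fin m) E)
    (x y : Fin m → E) : E :=
  ∑ i, ∑ j, x i * G i j * cj (y j)

/-- The dual lattice `M^∨ = {x ∈ M ⊗ E_v : ⟨x, M⟩ ⊆ O_{E_v}}` of the standard lattice
`M = O_{E_v}^m` with Gram matrix `G`. -/
def dualSet (E : Type) [KRSetting E] {m : ℕ} (G : Matrix (Fin m) (Fin m) E) :
    Set (Fin m → E) :=
  {x | ∀ y : Fin m → E, (∀ i, inO (y i)) → inO (gramV E G x y)}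

/-- `π M^∨`. -/
def piDual (E : Type) [KRSetting E] {m : ℕ} (G : Matrix (Fin m) (Fin m) E) :
    Set (Fin m → E) :=
  {x | ∃ z ∈ dualSet E G, x = uf E • z}

/-- The unitary group `U(M)` of the standard `O_{E_v}`-lattice `O_{E_v}^m` with hermitian
Gram matrix `G`, realized as integral matrices. -/
def UMO (E : Type) [KRSetting E] {m : ℕ} (G : Matrix (Fin m) (Fin m) E) :
    Set (Matrix (Fin m) (Fin m) (OC E)) :=
  {X | IsUnit X ∧ ∀ x y : Fin m → OC E,
    gramV E G (fun i => (X.mulVec x i : E)) (fun i => (X.mulVec y i : E))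
      = gramV E G (fun i => (x i : E)) (fun i => (y i : E))}

/-- Entrywise congruence mod `π^d` for matrices over `O_{E_v}`. -/
def congModO (E : Type) [KRSetting E] (d : ℕ) {a b : ℕ}
    (A B : Matrix (Fin a) (Fin b) (OC E)) : Prop :=
  ∀ i j, inO (((A i j : E) - (B i j : E)) / (uf E) ^ d)

/-- The Gram matrix `(⟨φ(u_k), φ(u_l)⟩)_{k,l}` of the columns of `Φ` with respect to the
hermitian form with Gram matrix `G`. -/
def gramO (E : Type) [KRSetting E] {m l : ℕ} (G : Matrix (Fin m) (Fin m) E)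
    (Φ : Matrix (Fin m) (Fin l) (OC E)) : Matrix (Fin l) (Fin l) E :=
  fun a b => ∑ i, ∑ j, (Φ i a : E) * G i j * cj ((Φ j b : E))

/-- `|I_d(L', M')|` where `M'` is the standard lattice with Gram matrix `GM` and `L'` the
standard lattice with Gram matrix `GL`: the number of `φ ∈ Hom(L', M'/π^d M')` with
`⟨φ x, φ y⟩ ≡ ⟨x, y⟩ (mod π^d)`. -/
def IcountL (E : Type) [KRSetting E] (d : ℕ) {m l : ℕ} (GM : Matrix (Fin m) (Fin m) E)
    (GB : Matrix (Fin l) (Fin l) E) : ℕ :=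
  Nat.card ((fun Φ => Quot.mk (congModO E d) Φ) ''
    {Φ : Matrix (Fin m) (Fin l) (OC E) | congMod E d (gramO E GM Φ) GB})

/-- The `j`-th column of `Φ`, as a vector over `E_v`. -/
def colE (E : Type) [KRSetting E] {m l : ℕ} (Φ : Matrix (Fin m) (Fin l) (OC E))
    (j : Fin l) : Fin m → E := fun i => (Φ i j : E)

/-- A submodule `N ⊆ O_{E_v}^m` is isometric to the standard unimodular lattice of rank
`n` (Gram matrix `1_n`). -/
def isomStd (E : Type) [KRSetting E] (n : ℕ) {m : ℕ} (GM : Matrix (Fin m) (Fin m) E)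
    (N : Submodule (OC E) (Fin m → OC E)) : Prop :=
  ∃ f : (Fin n → OC E) ≃ₗ[OC E] N, ∀ x y : Fin n → OC E,
    gramV E GM (fun i => ((f x).1 i : E)) (fun i => ((f y).1 i : E))
      = ∑ i, (x i : E) * cj ((y i : E))

/-- The Gram matrix `π A_n^{[r]} = diag(π 1_n, 1_n, π 1_{2r})` of the lattice `M`. -/
def gramM (E : Type) [KRSetting E] (n r : ℕ) :
    Matrix (Fin (2*n + 2*r)) (Fin (2*n + 2*r)) E :=
  Matrix.diagonal fun i => if (i : ℕ) < n then uf E else if (i : ℕ) < 2*n then 1 else uf E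

end KR

open MeasureTheory Filter Matrix KR

noncomputable section
namespace KRAux

variable {E : Type} [KRSetting E]

lemma uf_ne : (uf E) ≠ 0 := KRSetting.ϖ_ne

lemma v_one : KRSetting.v (1 : E) = 0 := by
  have h := KRSetting.v_mul (1:E) 1 one_ne_zero one_ne_zero
  rw [one_mul] at h; omega

lemma v_pow (m : ℕ) : KRSetting.v ((uf E) ^ m) = m := by
  induction m with
  | zero => simpa using v_one
  | succ k ih =>
      have h := KRSetting.v_mul ((uf E)^k) (uf E) (pow_ne_zero _ uf_ne) uf_ne
      rw [← pow_succ] at h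
      rw [h, KRSetting.v_ϖ, ih]; push_cast; omega

lemma v_inv {x : E} (hx : x ≠ 0) : KRSetting.v x⁻¹ = - KRSetting.v x := by
  have h := KRSetting.v_mul x x⁻¹ hx (inv_ne_zero hx)
  rw [mul_inv_cancel₀ hx, v_one] at h; omega

lemma v_zpow (t : ℤ) : KRSetting.v ((uf E) ^ t) = t := by
  cases t with
  | ofNat m => rw [Int.ofNat_eq_coe, zpow_natCast, v_pow]
  | negSucc m =>
      rw [zpow_negSucc, v_inv (pow_ne_zero _ uf_ne), v_pow]
      simp [Int.negSucc_eq]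

lemma inO_mul {a b : E} (ha : inO a) (hb : inO b) : inO (a * b) := by
  by_cases ha0 : a = 0
  · exact Or.inl (by rw [ha0, zero_mul])
  by_cases hb0 : b = 0
  · exact Or.inl (by rw [hb0, mul_zero])
  have hva : 0 ≤ KRSetting.v a := ha.resolve_left ha0
  have hvb : 0 ≤ KRSetting.v b := hb.resolve_left hb0
  refine Or.inr ?_
  rw [KRSetting.v_mul a b ha0 hb0]
  omega

lemma inO_uf : inO (uf E) := Or.inr (by rw [show uf E = KRSetting.ϖ from rfl, KRSetting.v_ϖ]; omega)

/-! ### rotation -/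

lemma rot_comp {n : ℕ} (h h' : ℕ) (hs : (2*n - h) + (2*n - h') = 2*n) (i : Fin (2*n)) :
    rot n h' (rot n h i) = i := by
  apply Fin.ext
  show ((((i:ℕ) + (2*n-h)) % (2*n)) + (2*n - h')) % (2*n) = (i:ℕ)
  rw [Nat.mod_add_mod]
  have hi := i.isLt
  have h2 : (i:ℕ) + (2*n-h) + (2*n-h') = (i:ℕ) + 2*n := by omega
  rw [h2, Nat.add_mod_right, Nat.mod_eq_of_lt hi]

def rotE (n h : ℕ) : Equiv.Perm (Fin (2*n)) where
  toFun := rot n h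
  invFun := rot n (2*n - h)
  left_inv := fun i => rot_comp h (2*n-h) (by omega) i
  right_inv := fun i => rot_comp (2*n-h) h (by omega) i

lemma rotE_symm_apply {n h : ℕ} (i : Fin (2*n)) : (rotE n h).symm i = rotE n (2*n-h) i := rfl

lemma rot_val_lt {n h : ℕ} (hh : h ≤ 2*n) {i : Fin (2*n)} (hi : (i:ℕ) < h) :
    ((rotE n h i : Fin (2*n)):ℕ) = (i:ℕ) + (2*n - h) := by
  show ((i:ℕ) + (2*n-h)) % (2*n) = (i:ℕ) + (2*n-h)
  exact Nat.mod_eq_of_lt (by omega)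

lemma rot_val_ge {n h : ℕ} (hh : h ≤ 2*n) {i : Fin (2*n)} (hi : h ≤ (i:ℕ)) :
    ((rotE n h i : Fin (2*n)):ℕ) = (i:ℕ) - h := by
  show ((i:ℕ) + (2*n-h)) % (2*n) = (i:ℕ) - h
  have hi2 := i.isLt
  have h1 : (i:ℕ) + (2*n-h) = ((i:ℕ) - h) + 2*n := by omega
  rw [h1, Nat.add_mod_right, Nat.mod_eq_of_lt (by omega)]

/-! ### the monomial matrices -/

def Wmat (E : Type) [KRSetting E] (n h : ℕ) : Matrix (Fin (2*n)) (Fin (2*n)) E :=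
  Matrix.of fun i j => if j = rotE n h i then (if h ≤ (i:ℕ) then uf E else 1) else 0

variable {n h : ℕ}

lemma Wmat_mul (A : Matrix (Fin (2*n)) (Fin (2*n)) E) (i j : Fin (2*n)) :
    (Wmat E n h * A) i j = (if h ≤ (i:ℕ) then uf E else 1) * A (rotE n h i) j := by
  rw [Matrix.mul_apply]
  rw [Finset.sum_eq_single (rotE n h i)]
  · simp [Wmat]
  · intro k _ hk; simp [Wmat, hk]
  · intro hk; exact absurd (Finset.mem_univ _) hk

lemma mul_Wmat (A : Matrix (Fin (2*n)) (Fin (2*n)) E) (i j : Fin (2*n)) :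
    (A * Wmat E n h) i j
      = A i (rotE n (2*n-h) j) * (if h ≤ ((rotE n (2*n-h) j : Fin (2*n)):ℕ) then uf E else 1) := by
  rw [Matrix.mul_apply]
  rw [Finset.sum_eq_single (rotE n (2*n-h) j)]
  · have : j = rotE n h (rotE n (2*n-h) j) := by
      rw [← rotE_symm_apply, Equiv.apply_symm_apply]
    simp [Wmat, ← this]
  · intro k _ hk
    have : j ≠ rotE n h k := by
      intro hc
      apply hk
      rw [hc, ← rotE_symm_apply, Equiv.symm_apply_apply]
    simp [Wmat, this]
  · intro hk; exact absurd (Finset.mem_univ _) hk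

lemma mul_WmatT (A : Matrix (Fin (2*n)) (Fin (2*n)) E) (i j : Fin (2*n)) :
    (A * (Wmat E n h)ᵀ) i j = A i (rotE n h j) * (if h ≤ (j:ℕ) then uf E else 1) := by
  rw [Matrix.mul_apply]
  rw [Finset.sum_eq_single (rotE n h j)]
  · simp [Wmat]
  · intro k _ hk; simp [Wmat, hk]
  · intro hk; exact absurd (Finset.mem_univ _) hk

lemma WmatT_mul (A : Matrix (Fin (2*n)) (Fin (2*n)) E) (i j : Fin (2*n)) :
    ((Wmat E n h)ᵀ * A) i j
      = (if h ≤ ((rotE n (2*n-h) i : Fin (2*n)):ℕ) then uf E else 1) * A (rotE n (2*n-h) i) j := by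
  rw [Matrix.mul_apply]
  rw [Finset.sum_eq_single (rotE n (2*n-h) i)]
  · have : i = rotE n h (rotE n (2*n-h) i) := by
      rw [← rotE_symm_apply, Equiv.apply_symm_apply]
    simp [Wmat, ← this]
  · intro k _ hk
    have : i ≠ rotE n h k := by
      intro hc; apply hk; rw [hc, ← rotE_symm_apply, Equiv.symm_apply_apply]
    simp [Wmat, this]
  · intro hk; exact absurd (Finset.mem_univ _) hk

lemma rot_ge_iff (hh : h ≤ 2*n) (i : Fin (2*n)) :
    (2*n - h ≤ ((rotE n h i : Fin (2*n)):ℕ)) ↔ (i:ℕ) < h := by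
  have hi := i.isLt
  by_cases hc : (i:ℕ) < h
  · rw [rot_val_lt hh hc]; omega
  · rw [rot_val_ge hh (by omega)]; omega

lemma Wmat_mul_Wmat (hh : h ≤ 2*n) :
    Wmat E n h * Wmat E n (2*n-h) = uf E • (1 : Matrix (Fin (2*n)) (Fin (2*n)) E) := by
  ext i j
  rw [Wmat_mul]
  have hinv : rotE n (2*n - h) (rotE n h i) = i := by
    rw [← rotE_symm_apply]; exact Equiv.symm_apply_apply _ _
  have hi := i.isLt
  simp only [Wmat, Matrix.of_apply, hinv, Matrix.smul_apply, Matrix.one_apply, smul_eq_mul]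
  by_cases hij : j = i
  · subst hij
    rw [if_pos rfl, if_pos rfl]
    by_cases hc : h ≤ (j:ℕ)
    · rw [if_pos hc, if_neg (by rw [rot_ge_iff hh]; omega), mul_one]
      try rw [mul_one]
    · rw [if_neg hc, if_pos (by rw [rot_ge_iff hh]; omega), one_mul]
      try rw [mul_one]
  · rw [if_neg hij, if_neg (Ne.symm hij), mul_zero, mul_zero]

lemma Wmat_mul_Wmat' (hh : h ≤ 2*n) :
    Wmat E n (2*n-h) * Wmat E n h = uf E • (1 : Matrix (Fin (2*n)) (Fin (2*n)) E) := by
  have := Wmat_mul_Wmat (E := E) (n := n) (h := 2*n-h) (by omega)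
  rwa [Nat.sub_sub_self hh] at this

lemma ctrans_Wmat : ctrans (Wmat E n h) = (Wmat E n h)ᵀ := by
  ext i j
  show cj (Wmat E n h j i) = (Wmat E n h) j i
  simp only [Wmat, Matrix.of_apply]
  show KRSetting.σ (E := E) _ = _
  rw [apply_ite (⇑(KRSetting.σ (E := E))), apply_ite (⇑(KRSetting.σ (E := E))), KRSetting.σ_ϖ, _root_.map_one, _root_.map_zero]

lemma ctrans_mulM (A B : Matrix (Fin (2*n)) (Fin (2*n)) E) :
    ctrans (A * B) = ctrans B * ctrans A := by
  ext i j
  show KRSetting.σ (E := E) ((A * B) j i) = _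
  rw [Matrix.mul_apply, map_sum, Matrix.mul_apply]
  exact Finset.sum_congr rfl fun k _ => by
    rw [_root_.map_mul]; exact mul_comm _ _

lemma ctrans_smulM (c : E) (A : Matrix (Fin (2*n)) (Fin (2*n)) E) :
    ctrans (c • A) = KRSetting.σ (E := E) c • ctrans A := by
  ext i j
  show KRSetting.σ (E := E) ((c • A) j i) = _
  rw [Matrix.smul_apply, smul_eq_mul, _root_.map_mul]
  rfl

lemma sigma_inv_uf : KRSetting.σ (E := E) ((uf E)⁻¹) = (uf E)⁻¹ := by
  rw [map_inv₀, KRSetting.σ_ϖ]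

/-! ### te, Phi -/

def te {n : ℕ} (h : ℕ) (i j : Fin (2*n)) : ℤ :=
  (if h ≤ (i:ℕ) then 1 else 0) + (if (j:ℕ) < h then 1 else 0) - 1

def Phi (E : Type) [KRSetting E] (n h : ℕ) (γ : Matrix (Fin (2*n)) (Fin (2*n)) E) :
    Matrix (Fin (2*n)) (Fin (2*n)) E :=
  (uf E)⁻¹ • (Wmat E n h * γ * Wmat E n (2*n-h))

lemma Phi_apply (hh : h ≤ 2*n) (γ : Matrix (Fin (2*n)) (Fin (2*n)) E) (i j : Fin (2*n)) :
    Phi E n h γ i j = (uf E) ^ (te h i j) * γ (rotE n h i) (rotE n h j) := by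
  have step : Phi E n h γ i j
      = (uf E)⁻¹ * ((if h ≤ (i:ℕ) then uf E else 1)
        * (γ (rotE n h i) (rotE n h j) * (if (j:ℕ) < h then uf E else 1))) := by
    rw [Phi, Matrix.smul_apply, smul_eq_mul, Matrix.mul_assoc, Wmat_mul]
    have h2 := mul_Wmat (E := E) (n := n) (h := 2*n-h) γ (rotE n h i) j
    rw [Nat.sub_sub_self hh] at h2
    rw [h2]
    simp only [rot_ge_iff hh]
    try rw [mul_assoc]
  rw [step, te]
  have hne : (uf E) ≠ 0 := uf_ne
  by_cases hi : h ≤ (i:ℕ) <;> by_cases hj : (j:ℕ) < h <;>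
    simp only [hi, hj, if_true, if_false, ite_true, ite_false] <;>
    norm_num <;> (try field_simp) <;> (try ring)

/-! ### wedge and vee -/

lemma rot_coe {n h : ℕ} (i : Fin (2*n)) : rot n h i = rotE n h i := rfl

lemma wedge_eq (hh : h ≤ 2*n) (X : Matrix (Fin (2*n)) (Fin (2*n)) E) :
    wedgeMat E n h X = (uf E)⁻¹ • (Wmat E n h * X * (Wmat E n h)ᵀ) := by
  ext i j
  rw [Matrix.smul_apply, smul_eq_mul, Matrix.mul_assoc, Wmat_mul, mul_WmatT]
  rw [wedgeMat, rot_coe, rot_coe]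
  have hne : (uf E) ≠ 0 := uf_ne
  by_cases hi : h ≤ (i:ℕ) <;> by_cases hj : h ≤ (j:ℕ) <;>
    simp only [hi, hj, if_true, if_false, ite_true, ite_false,
      (by omega : ((i:ℕ) < h ∧ (j:ℕ) < h) ↔ (¬ h ≤ (i:ℕ) ∧ ¬ h ≤ (j:ℕ))),
      (by tauto : (h ≤ (i:ℕ) ∧ h ≤ (j:ℕ)) ↔ (h ≤ (i:ℕ) ∧ h ≤ (j:ℕ)))] <;>
    norm_num <;> (try field_simp) <;> (try ring)

lemma vee_eq (hh : h ≤ 2*n) (X : Matrix (Fin (2*n)) (Fin (2*n)) E) :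
    veeMat E n h X = (uf E)⁻¹ • ((Wmat E n (2*n-h))ᵀ * X * Wmat E n (2*n-h)) := by
  ext i j
  rw [Matrix.smul_apply, smul_eq_mul, Matrix.mul_assoc]
  have h1 := WmatT_mul (E := E) (n := n) (h := 2*n-h) (X * Wmat E n (2*n-h)) i j
  rw [Nat.sub_sub_self hh] at h1
  rw [h1]
  have h2 := mul_Wmat (E := E) (n := n) (h := 2*n-h) X (rotE n h i) j
  rw [Nat.sub_sub_self hh] at h2
  rw [h2]
  simp only [rot_ge_iff hh]
  rw [veeMat, rot_coe, rot_coe]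
  have hne : (uf E) ≠ 0 := uf_ne
  by_cases hi : (i:ℕ) < h <;> by_cases hj : (j:ℕ) < h <;>
    simp only [hi, hj, if_true, if_false, ite_true, ite_false,
      (by omega : (h ≤ (i:ℕ) ∧ h ≤ (j:ℕ)) ↔ (¬ (i:ℕ) < h ∧ ¬ (j:ℕ) < h))] <;>
    norm_num <;> (try field_simp) <;> (try ring)

lemma smul_mul_smul_mat (c d : E) (X Y : Matrix (Fin (2*n)) (Fin (2*n)) E) :
    (c • X) * (d • Y) = (c*d) • (X*Y) := by
  rw [Matrix.smul_mul, Matrix.mul_smul, smul_smul]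

lemma brk_phi (hh : h ≤ 2*n) (B γ : Matrix (Fin (2*n)) (Fin (2*n)) E) :
    brk (veeMat E n h B) (Phi E n h γ)
      = (uf E)⁻¹ • ((Wmat E n (2*n-h))ᵀ * brk B γ * Wmat E n (2*n-h)) := by
  have hne : (uf E) ≠ 0 := uf_ne
  set W := Wmat E n h with hW
  set W' := Wmat E n (2*n-h) with hW'
  have hW'W : W' * W = uf E • 1 := Wmat_mul_Wmat' hh
  have hT : Wᵀ * W'ᵀ = uf E • 1 := by
    rw [← Matrix.transpose_mul, hW'W, Matrix.transpose_smul, Matrix.transpose_one]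
  have hct : ctrans (Phi E n h γ) = (uf E)⁻¹ • (W'ᵀ * ctrans γ * Wᵀ) := by
    rw [Phi, ctrans_smulM, sigma_inv_uf, ctrans_mulM, ctrans_mulM, ctrans_Wmat, ctrans_Wmat,
      Matrix.mul_assoc]
  have key : (W'ᵀ * ctrans γ * Wᵀ) * (W'ᵀ * B * W') * (W * γ * W')
      = (uf E * uf E) • (W'ᵀ * (ctrans γ * B * γ) * W') := by
    calc (W'ᵀ * ctrans γ * Wᵀ) * (W'ᵀ * B * W') * (W * γ * W')
        = W'ᵀ * ctrans γ * (Wᵀ * W'ᵀ) * B * (W' * W) * (γ * W') := by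
          simp only [Matrix.mul_assoc]
      _ = W'ᵀ * ctrans γ * (uf E • (1:Matrix (Fin (2*n)) (Fin (2*n)) E)) * B
            * (uf E • (1:Matrix (Fin (2*n)) (Fin (2*n)) E)) * (γ * W') := by rw [hT, hW'W]
      _ = (uf E * uf E) • (W'ᵀ * (ctrans γ * B * γ) * W') := by
          simp only [Matrix.mul_smul, Matrix.smul_mul, Matrix.mul_one, Matrix.one_mul,
            smul_smul, Matrix.mul_assoc]
  rw [brk, hct, vee_eq hh, Phi, ← hW, ← hW']
  rw [smul_mul_smul_mat, smul_mul_smul_mat, key, smul_smul]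
  rw [brk]
  congr 1
  field_simp

lemma key_trace (hh : h ≤ 2*n) (Y B γ : Matrix (Fin (2*n)) (Fin (2*n)) E) :
    trPair (wedgeMat E n h Y) (-(brk (veeMat E n h B) (Phi E n h γ)))
      = trPair Y (-(brk B γ)) := by
  have hne : (uf E) ≠ 0 := uf_ne
  set W := Wmat E n h with hW
  set W' := Wmat E n (2*n-h) with hW'
  have hW'W : W' * W = uf E • 1 := Wmat_mul_Wmat' hh
  have hT : Wᵀ * W'ᵀ = uf E • 1 := by
    rw [← Matrix.transpose_mul, hW'W, Matrix.transpose_smul, Matrix.transpose_one]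
  rw [brk_phi hh, wedge_eq hh, trPair, trPair]
  rw [mul_neg, Matrix.trace_neg, mul_neg, Matrix.trace_neg, neg_inj]
  rw [smul_mul_assoc, mul_smul_comm, smul_smul, Matrix.trace_smul]
  have assoc2 : (W * Y * Wᵀ) * ((W'ᵀ) * brk B γ * W')
      = W * (Y * (Wᵀ * W'ᵀ) * brk B γ * W') := by
    simp only [Matrix.mul_assoc]
  rw [assoc2, Matrix.trace_mul_comm, hT]
  have assoc3 : Y * (uf E • (1:Matrix (Fin (2*n)) (Fin (2*n)) E)) * brk B γ * W' * W
      = uf E • (Y * brk B γ * (W' * W)) := by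
    simp only [Matrix.mul_smul, Matrix.smul_mul, Matrix.mul_one, Matrix.one_mul,
      Matrix.mul_assoc]
  rw [assoc3, hW'W]
  simp only [Matrix.mul_smul, Matrix.mul_one, Matrix.trace_smul, smul_smul, smul_eq_mul]
  field_simp

/-! ### determinant, Iwahori stability, involutivity -/

lemma det_Phi (hh : h ≤ 2*n) (γ : Matrix (Fin (2*n)) (Fin (2*n)) E) :
    (Phi E n h γ).det = γ.det := by
  have hne : (uf E) ≠ 0 := uf_ne
  rw [Phi, Matrix.det_smul, Matrix.det_mul, Matrix.det_mul, Fintype.card_fin]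
  have h1 : (Wmat E n h).det * (Wmat E n (2*n-h)).det = (uf E)^(2*n) := by
    rw [← Matrix.det_mul, Wmat_mul_Wmat hh, Matrix.det_smul, Matrix.det_one,
      Fintype.card_fin, mul_one]
  have h2 : (Wmat E n h).det * γ.det * (Wmat E n (2*n-h)).det
      = γ.det * ((uf E)^(2*n)) := by rw [← h1]; ring
  rw [h2, ← mul_assoc, mul_comm ((uf E)⁻¹ ^ (2*n)) γ.det, mul_assoc, ← mul_pow,
    inv_mul_cancel₀ hne, one_pow, mul_one]

lemma phi_mem (hh : h ≤ 2*n) {γ : Matrix (Fin (2*n)) (Fin (2*n)) E}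
    (hγ : γ ∈ Iwahori E (2*n)) : Phi E n h γ ∈ Iwahori E (2*n) := by
  obtain ⟨h1, h2, h3, h4⟩ := hγ
  have hne : (uf E) ≠ 0 := uf_ne
  refine ⟨?_, ?_, ?_, ?_⟩
  · intro i j
    rw [Phi_apply hh, te]
    have hi2 := i.isLt
    have hj2 := j.isLt
    by_cases hi : h ≤ (i:ℕ) <;> by_cases hj : (j:ℕ) < h <;>
      simp only [hi, hj, if_true, if_false, ite_true, ite_false] <;> norm_num
    · exact inO_mul inO_uf (h1 _ _)
    · exact h1 _ _
    · exact h1 _ _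
    · -- i < h ≤ j : strictly-lower entry divided by π
      have hlow : ((rotE n h j : Fin (2*n)):ℕ) < ((rotE n h i : Fin (2*n)):ℕ) := by
        rw [rot_val_ge hh (i := j) (by omega), rot_val_lt hh (i := i) (by omega)]; omega
      have := h2 (rotE n h i) (rotE n h j) hlow
      rw [div_eq_mul_inv, mul_comm] at this
      exact this
  · intro i j hij
    rw [Phi_apply hh, te]
    have hi2 := i.isLt
    have hj2 := j.isLt
    by_cases hi : h ≤ (i:ℕ) <;> by_cases hj : (j:ℕ) < h <;>
      simp only [hi, hj, if_true, if_false, ite_true, ite_false] <;> norm_num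
    · -- i ≥ h > j : entry = π * γ', divided by π gives γ'
      rw [mul_comm, mul_div_assoc, div_self hne, mul_one]
      exact h1 _ _
    · -- both ≥ h
      have hlow : ((rotE n h j : Fin (2*n)):ℕ) < ((rotE n h i : Fin (2*n)):ℕ) := by
        rw [rot_val_ge hh (i := j) (by omega), rot_val_ge hh (i := i) hi]; omega
      exact h2 _ _ hlow
    · -- both < h
      have hlow : ((rotE n h j : Fin (2*n)):ℕ) < ((rotE n h i : Fin (2*n)):ℕ) := by
        rw [rot_val_lt hh (i := j) hj, rot_val_lt hh (i := i) (by omega)]; omega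
      exact h2 _ _ hlow
    · omega
  · rw [det_Phi hh]; exact h3
  · rw [det_Phi hh]; exact h4

lemma phi_phi (hh : h ≤ 2*n) (γ : Matrix (Fin (2*n)) (Fin (2*n)) E) :
    Phi E n (2*n-h) (Phi E n h γ) = γ := by
  have hne : (uf E) ≠ 0 := uf_ne
  rw [Phi, Phi, Nat.sub_sub_self hh]
  rw [Matrix.mul_smul, Matrix.smul_mul, smul_smul]
  have key : Wmat E n (2*n-h) * (Wmat E n h * γ * Wmat E n (2*n-h)) * Wmat E n h
      = (uf E * uf E) • γ := by
    calc Wmat E n (2*n-h) * (Wmat E n h * γ * Wmat E n (2*n-h)) * Wmat E n h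
        = (Wmat E n (2*n-h) * Wmat E n h) * γ * (Wmat E n (2*n-h) * Wmat E n h) := by
          simp only [Matrix.mul_assoc]
      _ = (uf E * uf E) • γ := by
          rw [Wmat_mul_Wmat' hh]
          simp only [Matrix.smul_mul, Matrix.mul_smul, Matrix.one_mul, Matrix.mul_one,
            smul_smul]
  rw [key, smul_smul]
  have : (uf E)⁻¹ * (uf E)⁻¹ * (uf E * uf E) = 1 := by field_simp
  rw [this, one_smul]

lemma phi_mem_iff (hh : h ≤ 2*n) (γ : Matrix (Fin (2*n)) (Fin (2*n)) E) :
    Phi E n h γ ∈ Iwahori E (2*n) ↔ γ ∈ Iwahori E (2*n) := by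
  constructor
  · intro hm
    have := phi_mem (E := E) (n := n) (h := 2*n-h) (by omega) hm
    rwa [phi_phi hh] at this
  · exact phi_mem hh

lemma phi_pre (hh : h ≤ 2*n) :
    Phi E n h ⁻¹' (Iwahori E (2*n)) = Iwahori E (2*n) := by
  ext γ; exact phi_mem_iff hh γ

/-! ### measure theory -/

open scoped ENNReal

lemma q_pos : 0 < qq E := by
  obtain ⟨k, hk, hq⟩ := KRSetting.q_pow (E := E)
  have hp := (KRSetting.pPrime (E := E)).pos
  exact lt_of_lt_of_eq (pow_pos hp k) hq.symm

lemma Q_ne_zero : ((qq E : ℝ≥0∞)) ≠ 0 := by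
  simpa using (q_pos (E := E)).ne'

lemma Q_ne_top : ((qq E : ℝ≥0∞)) ≠ ⊤ := ENNReal.natCast_ne_top _

lemma aemeas_mul (a : E) (ha : a ≠ 0) :
    AEMeasurable (fun x : E => a * x) (KRSetting.μ (E := E)) := by
  by_contra hm
  have h0 := KRSetting.μ_scale (E := E) a ha
  rw [Measure.map_of_not_aemeasurable hm] at h0
  have h1 : (((qq E:ℝ≥0∞) ^ (2 * KRSetting.v a)) • KRSetting.μ (E := E))
      {x : E | x = 0 ∨ 0 ≤ KRSetting.v x} = 0 := by rw [← h0]; simp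
  rw [Measure.smul_apply, KRSetting.μ_O, smul_eq_mul, mul_one] at h1
  exact (ENNReal.zpow_pos (Q_ne_zero (E := E)) (Q_ne_top (E := E)) _).ne' h1

lemma exists_mate (a : E) (ha : a ≠ 0) : ∃ m : E → E, Measurable m ∧
    (∀ᵐ x ∂(KRSetting.μ (E := E)), m x = a * x) ∧
    Measure.map m (KRSetting.μ (E := E))
      = ((qq E:ℝ≥0∞) ^ (2 * KRSetting.v a)) • KRSetting.μ (E := E) := by
  have h := aemeas_mul a ha
  refine ⟨h.mk _, h.measurable_mk, h.ae_eq_mk.symm, ?_⟩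
  rw [← Measure.map_congr h.ae_eq_mk]
  exact KRSetting.μ_scale (E := E) a ha

lemma sigmaFinite_smul {α : Type*} [MeasurableSpace α] (c : ℝ≥0∞) (hc : c ≠ ⊤)
    (μ : Measure α) [SigmaFinite μ] : SigmaFinite (c • μ) := by
  refine ⟨⟨⟨fun m => spanningSets μ m, fun _ => trivial, fun m => ?_, iUnion_spanningSets μ⟩⟩⟩
  rw [Measure.smul_apply, smul_eq_mul]
  exact ENNReal.mul_lt_top hc.lt_top (measure_spanningSets_lt_top μ m)

lemma pi_smul {ι : Type*} [Fintype ι] {α : ι → Type*} [∀ i, MeasurableSpace (α i)]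
    (μ : ∀ i, Measure (α i)) [∀ i, SigmaFinite (μ i)] (c : ι → ℝ≥0∞) (hc : ∀ i, c i ≠ ⊤) :
    Measure.pi (fun i => c i • μ i) = (∏ i, c i) • Measure.pi μ := by
  haveI : ∀ i, SigmaFinite (c i • μ i) := fun i => sigmaFinite_smul _ (hc i) _
  refine Measure.pi_eq fun s hs => ?_
  rw [Measure.smul_apply, Measure.pi_pi, smul_eq_mul, ← Finset.prod_mul_distrib]
  simp only [Measure.smul_apply, smul_eq_mul]

lemma map_pi_comp {ι : Type*} [Fintype ι] [DecidableEq ι] {α : Type*} [MeasurableSpace α]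
    (μ1 : Measure α) [SigmaFinite μ1] (r : Equiv.Perm ι) (m : ι → α → α)
    (hm : ∀ i, Measurable (m i)) (k : ι → ℝ≥0∞) (hk : ∀ i, k i ≠ ⊤)
    (hmap : ∀ i, Measure.map (m i) μ1 = k i • μ1) :
    Measure.map (fun (v : ι → α) (i : ι) => m i (v (r i))) (Measure.pi fun _ => μ1)
      = (∏ i, k i) • Measure.pi (fun _ => μ1) := by
  have hPP : ∀ (s : ι → Set α), Measure.pi (fun _ => μ1) (Set.pi Set.univ s)
      = ∏ i, μ1 (s i) := fun s => Measure.pi_pi (fun _ => μ1) s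
  have hg : Measurable (fun (v : ι → α) (i : ι) => m i (v (r i))) :=
    measurable_pi_lambda _ fun i => (hm i).comp (measurable_pi_apply (r i))
  have h1 : Measure.pi (fun i => k i • μ1)
      = Measure.map (fun (v : ι → α) (i : ι) => m i (v (r i))) (Measure.pi fun _ => μ1) := by
    haveI : ∀ i : ι, SigmaFinite (k i • μ1) := fun i => sigmaFinite_smul _ (hk i) _
    refine Measure.pi_eq fun s hs => ?_
    rw [Measure.map_apply hg (MeasurableSet.univ_pi hs)]
    have hpre : (fun (v : ι → α) (i : ι) => m i (v (r i))) ⁻¹' (Set.pi Set.univ s)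
        = Set.pi Set.univ (fun j => (m (r.symm j)) ⁻¹' (s (r.symm j))) := by
      ext v
      simp only [Set.mem_preimage, Set.mem_pi, Set.mem_univ, forall_true_left]
      constructor
      · intro H j
        have := H (r.symm j)
        rwa [Equiv.apply_symm_apply] at this
      · intro H i
        have := H (r i)
        rwa [Equiv.symm_apply_apply] at this
    rw [hpre, hPP]
    have hfac : ∀ j : ι, μ1 ((m (r.symm j)) ⁻¹' (s (r.symm j)))
        = (k (r.symm j) • μ1) (s (r.symm j)) := by
      intro j
      rw [← hmap (r.symm j), Measure.map_apply (hm _) (hs _)]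
    simp only [hfac]
    exact Equiv.prod_comp r.symm (fun j => (k j • μ1) (s j))
  rw [← h1]
  exact pi_smul (fun _ => μ1) k hk

lemma prod_zpow_Q {ι : Type*} (s : Finset ι) (f : ι → ℤ) :
    (∏ i ∈ s, ((qq E:ℝ≥0∞)) ^ (f i)) = ((qq E:ℝ≥0∞)) ^ (∑ i ∈ s, f i) := by
  classical
  induction s using Finset.cons_induction with
  | empty => simp
  | cons a s ha ih =>
      rw [Finset.prod_cons, Finset.sum_cons, ih,
        ← ENNReal.zpow_add (Q_ne_zero (E := E)) (Q_ne_top (E := E))]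

lemma sum_ite_lt (h m : ℕ) : (∑ j ∈ Finset.range m, if j < h then (1:ℤ) else 0) = min h m := by
  induction m with
  | zero => simp
  | succ k ih =>
      rw [Finset.sum_range_succ, ih]
      split_ifs <;> omega

lemma sum_ite_le (h m : ℕ) : (∑ j ∈ Finset.range m, if h ≤ j then (1:ℤ) else 0)
    = m - min h m := by
  induction m with
  | zero => simp
  | succ k ih =>
      rw [Finset.sum_range_succ, ih]
      push_cast
      split_ifs <;> omega

lemma sum_te {n h : ℕ} (hh : h ≤ 2*n) :
    (∑ i : Fin (2*n), ∑ j : Fin (2*n), te (n := n) h i j) = 0 := by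
  have hrow : ∀ i : Fin (2*n), (∑ j : Fin (2*n), te (n := n) h i j)
      = 2*n * (if h ≤ (i:ℕ) then (1:ℤ) else 0) + h - 2*n := by
    intro i
    simp only [te]
    rw [Finset.sum_sub_distrib, Finset.sum_add_distrib, Finset.sum_const, Finset.sum_const]
    have e1 : (∑ j : Fin (2*n), if (j:ℕ) < h then (1:ℤ) else 0) = h := by
      rw [Fin.sum_univ_eq_sum_range (fun j => if j < h then (1:ℤ) else 0), sum_ite_lt]
      omega
    rw [e1, Finset.card_univ, Fintype.card_fin]
    push_cast
    ring
  rw [Finset.sum_congr rfl (fun i _ => hrow i)]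
  rw [Finset.sum_sub_distrib, Finset.sum_add_distrib, Finset.sum_const, Finset.sum_const,
    ← Finset.mul_sum]
  have e2 : (∑ i : Fin (2*n), if h ≤ (i:ℕ) then (1:ℤ) else 0) = 2*n - h := by
    rw [Fin.sum_univ_eq_sum_range (fun j => if h ≤ j then (1:ℤ) else 0), sum_ite_le]
    omega
  rw [e2, Finset.card_univ, Fintype.card_fin]
  push_cast
  ring

/-! ### null sets from single entries -/

lemma null_eval_row {n : ℕ} {b : Fin (2*n)} {D' : Set E} (h0 : KRSetting.μ (E := E) D' = 0) :
    (Measure.pi fun _ : Fin (2*n) => KRSetting.μ (E := E)) {v | v b ∈ D'} = 0 := by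
  have h1 : {v : Fin (2*n) → E | v b ∈ D'}
      = Set.pi Set.univ (fun j => if j = b then D' else Set.univ) := by
    ext v
    simp only [Set.mem_setOf_eq, Set.mem_pi]
    constructor
    · intro hg j _
      by_cases hj : j = b
      · subst hj; simpa using hg
      · simp [hj]
    · intro hg
      have := hg b (Set.mem_univ b)
      simpa using this
  rw [h1, Measure.pi_pi]
  exact Finset.prod_eq_zero (Finset.mem_univ b) (by simp [h0])

lemma null_eval {n : ℕ} {a b : Fin (2*n)} {D : Set E} (hD : KRSetting.μ (E := E) D = 0) :
    matmu E (2*n) (2*n) {γ | γ a b ∈ D} = 0 := by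
  show (Measure.pi fun _ : Fin (2*n) => Measure.pi fun _ : Fin (2*n) => KRSetting.μ (E := E))
      {γ : Fin (2*n) → Fin (2*n) → E | γ a b ∈ D} = 0
  obtain ⟨D', hDD', _, hD'0⟩ := exists_measurable_superset_of_null hD
  refine measure_mono_null (fun γ hγ => hDD' hγ) ?_ (t := {γ | γ a b ∈ D'})
  have h1 : {γ : Fin (2*n) → Fin (2*n) → E | γ a b ∈ D'}
      = Set.pi Set.univ (fun i => if i = a then {v : Fin (2*n) → E | v b ∈ D'} else Set.univ) := by
    ext γ
    simp only [Set.mem_setOf_eq, Set.mem_pi]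
    constructor
    · intro hg i _
      by_cases hi : i = a
      · subst hi; simpa using hg
      · simp [hi]
    · intro hg
      have := hg a (Set.mem_univ a)
      simpa using this
  rw [h1, Measure.pi_pi]
  exact Finset.prod_eq_zero (Finset.mem_univ a) (by simp [null_eval_row hD'0])

/-! ### the measurable mate of Phi and its pushforward -/

lemma exists_phiTilde (n h : ℕ) (hh : h ≤ 2*n) :
    ∃ T : Matrix (Fin (2*n)) (Fin (2*n)) E → Matrix (Fin (2*n)) (Fin (2*n)) E,
      Measurable T ∧
      Measure.map T (matmu E (2*n) (2*n)) = matmu E (2*n) (2*n) ∧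
      ∀ᵐ γ ∂(matmu E (2*n) (2*n)), T γ = Phi E n h γ := by
  have hm0 : ∀ i j : Fin (2*n), ∃ m : E → E, Measurable m ∧
      (∀ᵐ x ∂(KRSetting.μ (E := E)), m x = (uf E) ^ (te (n := n) h i j) * x) ∧
      Measure.map m (KRSetting.μ (E := E))
        = ((qq E:ℝ≥0∞) ^ (2 * te (n := n) h i j)) • KRSetting.μ (E := E) := by
    intro i j
    obtain ⟨m, h1, h2, h3⟩ := exists_mate ((uf E) ^ (te (n := n) h i j))
      (zpow_ne_zero _ (uf_ne (E := E)))
    exact ⟨m, h1, h2, by rwa [v_zpow] at h3⟩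
  choose mm hmeas hae hmap using hm0
  set R := rotE n h with hR
  refine ⟨fun γ i j => mm i j (γ (R i) (R j)), ?_, ?_, ?_⟩
  · exact measurable_pi_lambda _ fun i => measurable_pi_lambda _ fun j =>
      (hmeas i j).comp ((measurable_pi_apply (R j)).comp (measurable_pi_apply (R i)))
  · -- pushforward
    have hrow : ∀ i : Fin (2*n),
        Measure.map (fun (v : Fin (2*n) → E) (j : Fin (2*n)) => mm i j (v (R j)))
          (Measure.pi fun _ => KRSetting.μ (E := E))
        = ((qq E:ℝ≥0∞) ^ (∑ j : Fin (2*n), 2 * te (n := n) h i j))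
            • Measure.pi (fun _ => KRSetting.μ (E := E)) := by
      intro i
      rw [← prod_zpow_Q]
      exact map_pi_comp (KRSetting.μ (E := E)) R (mm i) (hmeas i) _
        (fun j => (ENNReal.zpow_lt_top (Q_ne_zero (E := E)) (Q_ne_top (E := E)) _).ne)
        (hmap i)
    have houter := map_pi_comp (ι := Fin (2*n))
      (Measure.pi fun _ : Fin (2*n) => KRSetting.μ (E := E)) R
      (fun i (v : Fin (2*n) → E) (j : Fin (2*n)) => mm i j (v (R j)))
      (fun i => measurable_pi_lambda _ fun j => (hmeas i j).comp (measurable_pi_apply (R j)))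
      (fun i => (qq E:ℝ≥0∞) ^ (∑ j : Fin (2*n), 2 * te (n := n) h i j))
      (fun i => (ENNReal.zpow_lt_top (Q_ne_zero (E := E)) (Q_ne_top (E := E)) _).ne)
      hrow
    have hone : (∏ i : Fin (2*n), (qq E:ℝ≥0∞) ^ (∑ j : Fin (2*n), 2 * te (n := n) h i j))
        = 1 := by
      rw [prod_zpow_Q]
      have e2 : (∑ i : Fin (2*n), ∑ j : Fin (2*n), 2 * te (n := n) h i j) = 0 := by
        have hte := sum_te (n := n) (h := h) hh
        calc (∑ i : Fin (2*n), ∑ j : Fin (2*n), 2 * te (n := n) h i j)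
            = 2 * (∑ i : Fin (2*n), ∑ j : Fin (2*n), te (n := n) h i j) := by
              rw [Finset.mul_sum]
              exact Finset.sum_congr rfl fun i _ => by rw [Finset.mul_sum]
          _ = 0 := by rw [hte]; ring
      rw [e2, zpow_zero]
    show Measure.map (fun (γ : Fin (2*n) → Fin (2*n) → E) (i : Fin (2*n)) =>
        (fun (w : Fin (2*n) → E) (j : Fin (2*n)) => mm i j (w (R j))) (γ (R i)))
      (Measure.pi fun _ : Fin (2*n) => Measure.pi fun _ : Fin (2*n) => KRSetting.μ (E := E))
      = Measure.pi fun _ : Fin (2*n) => Measure.pi fun _ : Fin (2*n) => KRSetting.μ (E := E)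
    rw [houter, hone, one_smul]
  · -- a.e. equality with Phi
    have hbad : ∀ i j : Fin (2*n), matmu E (2*n) (2*n)
        {γ : Matrix (Fin (2*n)) (Fin (2*n)) E |
          γ (R i) (R j) ∈ {x : E | mm i j x ≠ (uf E) ^ (te (n := n) h i j) * x}} = 0 := by
      intro i j
      exact null_eval (ae_iff.mp (hae i j))
    have hN : matmu E (2*n) (2*n) (⋃ i : Fin (2*n), ⋃ j : Fin (2*n),
        {γ : Matrix (Fin (2*n)) (Fin (2*n)) E |
          γ (R i) (R j) ∈ {x : E | mm i j x ≠ (uf E) ^ (te (n := n) h i j) * x}}) = 0 :=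
      measure_iUnion_null fun i => measure_iUnion_null fun j => hbad i j
    rw [ae_iff]
    refine measure_mono_null ?_ hN
    intro γ hγ
    simp only [Set.mem_setOf_eq] at hγ
    by_contra hmem
    apply hγ
    funext i j
    simp only [Set.mem_iUnion, Set.mem_setOf_eq] at hmem
    push_neg at hmem
    have := hmem i j
    rw [Phi_apply hh, this]

/-! ### invariance of the restricted measure -/

lemma outer_le (n h : ℕ) (hh : h ≤ 2*n) (S : Set (Matrix (Fin (2*n)) (Fin (2*n)) E)) :
    matmu E (2*n) (2*n) (Phi E n h ⁻¹' S) ≤ matmu E (2*n) (2*n) S := by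
  obtain ⟨T, hTm, hTmap, hTae⟩ := exists_phiTilde (E := E) n h hh
  have hN : matmu E (2*n) (2*n) {γ | ¬ T γ = Phi E n h γ} = 0 := ae_iff.mp hTae
  rw [measure_eq_iInf S]
  refine le_iInf fun U => le_iInf fun hSU => le_iInf fun hU => ?_
  have h1 : Phi E n h ⁻¹' S ⊆ (T ⁻¹' U) ∪ {γ | ¬ T γ = Phi E n h γ} := by
    intro γ hγ
    by_cases hT : T γ = Phi E n h γ
    · left; show T γ ∈ U; rw [hT]; exact hSU hγ
    · right; exact hT
  calc matmu E (2*n) (2*n) (Phi E n h ⁻¹' S)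
      ≤ matmu E (2*n) (2*n) ((T ⁻¹' U) ∪ {γ | ¬ T γ = Phi E n h γ}) := measure_mono h1
    _ ≤ matmu E (2*n) (2*n) (T ⁻¹' U) + matmu E (2*n) (2*n) {γ | ¬ T γ = Phi E n h γ} :=
        measure_union_le _ _
    _ = matmu E (2*n) (2*n) (T ⁻¹' U) := by rw [hN, add_zero]
    _ = matmu E (2*n) (2*n) U := by rw [← Measure.map_apply hTm hU, hTmap]

lemma phi_phi' (n h : ℕ) (hh : h ≤ 2*n) (γ : Matrix (Fin (2*n)) (Fin (2*n)) E) :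
    Phi E n h (Phi E n (2*n-h) γ) = γ := by
  have := phi_phi (E := E) (n := n) (h := 2*n-h) (by omega) γ
  rwa [Nat.sub_sub_self hh] at this

lemma outer_eq (n h : ℕ) (hh : h ≤ 2*n) (S : Set (Matrix (Fin (2*n)) (Fin (2*n)) E)) :
    matmu E (2*n) (2*n) (Phi E n h ⁻¹' S) = matmu E (2*n) (2*n) S := by
  refine le_antisymm (outer_le n h hh S) ?_
  have hS : S = Phi E n (2*n-h) ⁻¹' (Phi E n h ⁻¹' S) := by
    ext γ
    simp only [Set.mem_preimage]
    rw [phi_phi' n h hh γ]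
  calc matmu E (2*n) (2*n) S
      = matmu E (2*n) (2*n) (Phi E n (2*n-h) ⁻¹' (Phi E n h ⁻¹' S)) := by rw [← hS]
    _ ≤ matmu E (2*n) (2*n) (Phi E n h ⁻¹' S) := outer_le n (2*n-h) (by omega) _

lemma map_restrict (n h : ℕ) (hh : h ≤ 2*n)
    {T : Matrix (Fin (2*n)) (Fin (2*n)) E → Matrix (Fin (2*n)) (Fin (2*n)) E}
    (hTm : Measurable T) (hTae : ∀ᵐ γ ∂(matmu E (2*n) (2*n)), T γ = Phi E n h γ) :
    Measure.map T ((matmu E (2*n) (2*n)).restrict (Iwahori E (2*n)))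
      = (matmu E (2*n) (2*n)).restrict (Iwahori E (2*n)) := by
  have hN : matmu E (2*n) (2*n) {γ | ¬ T γ = Phi E n h γ} = 0 := ae_iff.mp hTae
  ext B hB
  rw [Measure.map_apply hTm hB, Measure.restrict_apply (hTm hB), Measure.restrict_apply hB]
  have e1 : matmu E (2*n) (2*n) (T ⁻¹' B ∩ Iwahori E (2*n))
      = matmu E (2*n) (2*n) (Phi E n h ⁻¹' B ∩ Iwahori E (2*n)) := by
    apply le_antisymm
    · calc matmu E (2*n) (2*n) (T ⁻¹' B ∩ Iwahori E (2*n))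
          ≤ matmu E (2*n) (2*n)
              ((Phi E n h ⁻¹' B ∩ Iwahori E (2*n)) ∪ {γ | ¬ T γ = Phi E n h γ}) := by
            apply measure_mono
            rintro γ ⟨hγ1, hγ2⟩
            by_cases hT : T γ = Phi E n h γ
            · exact Or.inl ⟨by rw [Set.mem_preimage, ← hT]; exact hγ1, hγ2⟩
            · exact Or.inr hT
        _ ≤ matmu E (2*n) (2*n) (Phi E n h ⁻¹' B ∩ Iwahori E (2*n))
              + matmu E (2*n) (2*n) {γ | ¬ T γ = Phi E n h γ} := measure_union_le _ _
        _ = matmu E (2*n) (2*n) (Phi E n h ⁻¹' B ∩ Iwahori E (2*n)) := by rw [hN, add_zero]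
    · calc matmu E (2*n) (2*n) (Phi E n h ⁻¹' B ∩ Iwahori E (2*n))
          ≤ matmu E (2*n) (2*n)
              ((T ⁻¹' B ∩ Iwahori E (2*n)) ∪ {γ | ¬ T γ = Phi E n h γ}) := by
            apply measure_mono
            rintro γ ⟨hγ1, hγ2⟩
            by_cases hT : T γ = Phi E n h γ
            · exact Or.inl ⟨by rw [Set.mem_preimage, hT]; exact hγ1, hγ2⟩
            · exact Or.inr hT
        _ ≤ matmu E (2*n) (2*n) (T ⁻¹' B ∩ Iwahori E (2*n))
              + matmu E (2*n) (2*n) {γ | ¬ T γ = Phi E n h γ} := measure_union_le _ _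
        _ = matmu E (2*n) (2*n) (T ⁻¹' B ∩ Iwahori E (2*n)) := by rw [hN, add_zero]
  rw [e1]
  have e2 : Phi E n h ⁻¹' B ∩ Iwahori E (2*n) = Phi E n h ⁻¹' (B ∩ Iwahori E (2*n)) := by
    rw [Set.preimage_inter, phi_pre hh]
  rw [e2, outer_eq n h hh]

/-! ### the substitution lemma -/

lemma integral_phi (n h : ℕ) (hh : h ≤ 2*n) (F : Matrix (Fin (2*n)) (Fin (2*n)) E → ℂ) :
    ∫ γ in Iwahori E (2*n), F (Phi E n h γ) ∂(matmu E (2*n) (2*n))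
      = ∫ γ in Iwahori E (2*n), F γ ∂(matmu E (2*n) (2*n)) := by
  obtain ⟨T, hTm, hTmap, hTae⟩ := exists_phiTilde (E := E) n h hh
  obtain ⟨T', hT'm, hT'map, hT'ae⟩ := exists_phiTilde (E := E) n (2*n - h) (by omega)
  set ν := (matmu E (2*n) (2*n)).restrict (Iwahori E (2*n)) with hν
  have hmapν : Measure.map T ν = ν := map_restrict n h hh hTm hTae
  have hmapν' : Measure.map T' ν = ν := map_restrict n (2*n-h) (by omega) hT'm hT'ae
  have haeν : ∀ᵐ γ ∂ν, T γ = Phi E n h γ := ae_restrict_of_ae hTae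
  have haeν' : ∀ᵐ γ ∂ν, T' γ = Phi E n (2*n-h) γ := ae_restrict_of_ae hT'ae
  show ∫ γ, F (Phi E n h γ) ∂ν = ∫ γ, F γ ∂ν
  by_cases hF : AEStronglyMeasurable F ν
  · calc ∫ γ, F (Phi E n h γ) ∂ν
        = ∫ γ, F (T γ) ∂ν := integral_congr_ae (haeν.mono fun γ hγ => by simp only []; rw [hγ])
      _ = ∫ δ, F δ ∂(Measure.map T ν) := (integral_map hTm.aemeasurable (by rwa [hmapν])).symm
      _ = ∫ γ, F γ ∂ν := by rw [hmapν]
  · have hF2 : ¬ AEStronglyMeasurable (fun γ => F (Phi E n h γ)) ν := by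
      intro hC
      apply hF
      have hC' : AEStronglyMeasurable (fun γ => F (Phi E n h γ)) (Measure.map T' ν) := by
        rwa [hmapν']
      have hcomp := hC'.comp_aemeasurable hT'm.aemeasurable
      refine hcomp.congr ?_
      refine haeν'.mono fun γ hγ => ?_
      show F (Phi E n h (T' γ)) = F γ
      rw [hγ, phi_phi' n h hh γ]
    rw [integral_non_aestronglyMeasurable hF2, integral_non_aestronglyMeasurable hF]

end KRAux


open KR in
/-- Lemma 3.8: `𝒢(Y,B) = 𝒢(Y^{∧_h}, B^{∨_h})` for `Y ∈ 𝓡_{2n}` and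
`B ∈ 𝓡_{2n}^h`. -/
theorem statement2
    (E : Type) [KRSetting E] (n : ℕ) (hn : 0 < n) (h : ℕ) (hh : h ≤ 2*n)
    (σp : Equiv.Perm (Fin (2*n))) (e : Fin (2*n) → ℤ)
    (hσ : σp * σp = 1) (he : ∀ i, e (σp i) = e i)
    (τ : Equiv.Perm (Fin (2*n))) (lam : Fin (2*n) → ℤ) (s : ℕ)
    (hs1 : 1 ≤ s) (hs2 : s ≤ min h (2*n - h))
    (hτ : specialPerm n h s τ) (hτ2 : τ * τ = 1) (hlam : ∀ i, lam (τ i) = lam i) :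
    Gfun E n (Ymat E σp e) (Ymat E τ lam)
      = Gfun E n (wedgeMat E n h (Ymat E σp e)) (veeMat E n h (Ymat E τ lam)) := by
  set Y := Ymat E σp e
  set B := Ymat E τ lam
  calc Gfun E n Y B
      = ∫ γ in Iwahori E (2*n),
          ch (trPair (wedgeMat E n h Y)
            (-(brk (veeMat E n h B) (KRAux.Phi E n h γ)))) ∂(matmu E (2*n) (2*n)) := by
        rw [Gfun]
        exact MeasureTheory.integral_congr_ae (Filter.Eventually.of_forall fun γ =>
          (congrArg ch (KRAux.key_trace hh Y B γ)).symm)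
    _ = ∫ γ in Iwahori E (2*n),
          ch (trPair (wedgeMat E n h Y) (-(brk (veeMat E n h B) γ))) ∂(matmu E (2*n) (2*n)) :=
        KRAux.integral_phi (E := E) n h hh
          (fun δ => ch (trPair (wedgeMat E n h Y) (-(brk (veeMat E n h B) δ))))
    _ = Gfun E n (wedgeMat E n h Y) (veeMat E n h B) := by rw [Gfun]
end
end
end

section
/- Let L, L_1, L_2, M be as in the context, let N be the (unimodular) sublattice of M spanned by v_{n+1}, …, v_{2n}, and let N^⊥ := (E_v·N)^⊥ ∩ M. Then for all sufficiently large d: |{φ_1 ∈ J_d(L_1, M) : ⟨φ_1(L_1), N⟩ ≡ 0 mod π^d}| = |I_d(L_1, N^⊥)|. -/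
open MeasureTheory Filter Matrix

noncomputable section

section Stmt11Aux

open KR

variable {E : Type} [KRSetting E]

namespace S11

lemma inO_zero : inO (0 : E) := Or.inl rfl

lemma inO_add {a b : E} (ha : inO a) (hb : inO b) : inO (a + b) := (Oring E).add_mem ha hb

lemma inO_neg {a : E} (ha : inO a) : inO (-a) := (Oring E).neg_mem ha

lemma inO_mul {a b : E} (ha : inO a) (hb : inO b) : inO (a * b) := (Oring E).mul_mem ha hb

lemma inO_sub {a b : E} (ha : inO a) (hb : inO b) : inO (a - b) := by
  rw [sub_eq_add_neg]; exact inO_add ha (inO_neg hb)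

lemma inO_sum {ι : Type*} (s : Finset ι) (f : ι → E) (h : ∀ i ∈ s, inO (f i)) :
    inO (∑ i ∈ s, f i) := show (∑ i ∈ s, f i) ∈ Oring E from Subring.sum_mem _ h

lemma inO_uf : inO (uf E) := Or.inr (by rw [KRSetting.v_ϖ]; norm_num)

lemma uf_ne : (uf E) ≠ 0 := KRSetting.ϖ_ne

lemma inO_cj {a : E} (ha : inO a) : inO (cj a) := by
  by_cases h0 : a = 0
  · subst h0; exact Or.inl (map_zero _)
  · rcases ha with h | h
    · exact absurd h h0
    · exact Or.inr (by rw [KRSetting.v_σ a h0]; exact h)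

lemma inO_coe (x : OC E) : inO (x : E) := x.2


lemma congModO_equiv (d : ℕ) {a b : ℕ} :
    Equivalence (congModO E d (a := a) (b := b)) where
  refl A := fun i j => by simpa using (S11.inO_zero : inO (0 : E))
  symm {A B} h := fun i j => by
    have h1 := h i j
    have : ((B i j : E) - (A i j : E)) / (uf E) ^ d
        = -(((A i j : E) - (B i j : E)) / (uf E) ^ d) := by ring
    rw [this]; exact inO_neg h1
  trans {A B C} h1 h2 := fun i j => by
    have h3 := inO_add (h1 i j) (h2 i j)
    rw [← add_div, sub_add_sub_cancel] at h3
    exact h3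

lemma quot_mk_eq_iff (d : ℕ) {a b : ℕ} (A B : Matrix (Fin a) (Fin b) (OC E)) :
    Quot.mk (congModO E d) A = Quot.mk (congModO E d) B ↔ congModO E d A B := by
  constructor
  · intro h
    exact (Equivalence.eqvGen_iff (congModO_equiv d)).mp (Quot.eqvGen_exact h)
  · exact Quot.sound



def embI (n r : ℕ) (i : Fin (n + 2*r)) : Fin (2*n + 2*r) :=
  if h : (i : ℕ) < n then ⟨i, by omega⟩ else ⟨(i : ℕ) + n, by have := i.isLt; omega⟩

def midI (n r : ℕ) (j : Fin n) : Fin (2*n + 2*r) := ⟨n + (j : ℕ), by have := j.isLt; omega⟩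

def splitE (n r : ℕ) : (Fin (n + 2*r) ⊕ Fin n) ≃ Fin (2*n + 2*r) where
  toFun := Sum.elim (embI n r) (midI n r)
  invFun i :=
    if h : (i : ℕ) < n then Sum.inl ⟨i, by omega⟩
    else if h2 : (i : ℕ) < 2*n then Sum.inr ⟨(i : ℕ) - n, by omega⟩
    else Sum.inl ⟨(i : ℕ) - n, by have := i.isLt; omega⟩
  left_inv x := by
    rcases x with i | j
    · dsimp only [Sum.elim_inl, embI]
      by_cases h : (i : ℕ) < n
      · rw [dif_pos h]
        dsimp only
        rw [dif_pos h]
      · rw [dif_neg h]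
        dsimp only
        have hi := i.isLt
        rw [dif_neg (by omega : ¬ ((i : ℕ) + n < n)),
          dif_neg (by omega : ¬ ((i : ℕ) + n < 2*n))]
        exact congrArg Sum.inl (Fin.ext (show (i : ℕ) + n - n = (i : ℕ) by omega))
    · dsimp only [Sum.elim_inr, midI]
      have hj := j.isLt
      rw [dif_neg (by omega : ¬ (n + (j : ℕ) < n)),
        dif_pos (by omega : n + (j : ℕ) < 2*n)]
      exact congrArg Sum.inr (Fin.ext (show n + (j : ℕ) - n = (j : ℕ) by omega))
  right_inv i := by
    dsimp only
    have hi := i.isLt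
    by_cases h : (i : ℕ) < n
    · rw [dif_pos h]
      dsimp only [Sum.elim_inl, embI]
      rw [dif_pos h]
    · by_cases h2 : (i : ℕ) < 2*n
      · rw [dif_neg h, dif_pos h2]
        dsimp only [Sum.elim_inr, midI]
        exact Fin.ext (show n + ((i : ℕ) - n) = (i : ℕ) by omega)
      · rw [dif_neg h, dif_neg h2]
        dsimp only [Sum.elim_inl, embI]
        rw [dif_neg (by omega : ¬ ((i : ℕ) - n < n))]
        exact Fin.ext (show (i : ℕ) - n + n = (i : ℕ) by omega)


lemma splitE_inl (n r : ℕ) (i : Fin (n + 2*r)) : splitE n r (Sum.inl i) = embI n r i := rfl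

lemma splitE_inr (n r : ℕ) (j : Fin n) : splitE n r (Sum.inr j) = midI n r j := rfl

lemma sum_split {n r : ℕ} (f : Fin (2*n + 2*r) → E) :
    ∑ i, f i = (∑ i : Fin (n + 2*r), f (embI n r i)) + ∑ j : Fin n, f (midI n r j) := by
  rw [← Equiv.sum_comp (splitE n r) f, Fintype.sum_sum_type]
  rfl


lemma gramO_diagonal {m l : ℕ} (dv : Fin m → E) (Φ : Matrix (Fin m) (Fin l) (OC E))
    (a b : Fin l) :
    gramO E (Matrix.diagonal dv) Φ a b = ∑ i, (Φ i a : E) * dv i * cj ((Φ i b : E)) := by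
  unfold gramO
  refine Finset.sum_congr rfl fun i _ => ?_
  simp only [Matrix.diagonal_apply, mul_ite, ite_mul, mul_zero, zero_mul]
  rw [Finset.sum_ite_eq]
  simp

lemma gramV_diagonal {m : ℕ} (dv : Fin m → E) (x y : Fin m → E) :
    gramV E (Matrix.diagonal dv) x y = ∑ i, x i * dv i * cj (y i) := by
  unfold gramV
  refine Finset.sum_congr rfl fun i _ => ?_
  simp only [Matrix.diagonal_apply, mul_ite, ite_mul, mul_zero, zero_mul]
  rw [Finset.sum_ite_eq]
  simp

lemma gramV_single {m : ℕ} (dv : Fin m → E) (x : Fin m → E) (i : Fin m) :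
    gramV E (Matrix.diagonal dv) x (Pi.single i 1) = x i * dv i := by
  rw [gramV_diagonal]
  have hcj : ∀ a : Fin m, cj (Pi.single (M := fun _ => E) i 1 a) = if a = i then (1 : E) else 0 := by
    intro a
    rw [Pi.single_apply]
    split_ifs <;> simp [cj]
  simp only [hcj, mul_ite, mul_one, mul_zero]
  rw [Finset.sum_ite_eq']
  simp

def dvF (E : Type) [KRSetting E] (n r : ℕ) : Fin (2*n + 2*r) → E :=
  fun i => if (i : ℕ) < n then uf E else if (i : ℕ) < 2*n then 1 else uf E

lemma gramM_eq (n r : ℕ) : gramM E n r = Matrix.diagonal (dvF E n r) := rfl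

lemma dvF_emb {n r : ℕ} (i : Fin (n + 2*r)) : dvF E n r (embI n r i) = uf E := by
  by_cases h : (i : ℕ) < n
  · rw [embI, dif_pos h]
    dsimp only [dvF]
    rw [if_pos h]
  · rw [embI, dif_neg h]
    dsimp only [dvF]
    rw [if_neg (by omega), if_neg (by omega)]

lemma dvF_mid {n r : ℕ} (j : Fin n) : dvF E n r (midI n r j) = 1 := by
  have hj := j.isLt
  dsimp only [dvF, midI]
  rw [if_neg (by omega), if_pos (by omega)]

lemma gramO_smul_one {m l : ℕ} (Ψ : Matrix (Fin m) (Fin l) (OC E)) (a b : Fin l) :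
    gramO E ((uf E) • (1 : Matrix (Fin m) (Fin m) E)) Ψ a b
      = ∑ i, (Ψ i a : E) * uf E * cj ((Ψ i b : E)) := by
  rw [Matrix.smul_one_eq_diagonal, gramO_diagonal]


def delM {n r : ℕ} (Φ : Matrix (Fin (2*n + 2*r)) (Fin n) (OC E)) :
    Matrix (Fin (n + 2*r)) (Fin n) (OC E) := fun i j => Φ (embI n r i) j

def insM {n r : ℕ} (Ψ : Matrix (Fin (n + 2*r)) (Fin n) (OC E)) :
    Matrix (Fin (2*n + 2*r)) (Fin n) (OC E) :=
  fun i j => Sum.elim (fun a => Ψ a j) (fun _ => 0) ((splitE n r).symm i)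

lemma insM_emb {n r : ℕ} (Ψ : Matrix (Fin (n + 2*r)) (Fin n) (OC E)) (i : Fin (n + 2*r))
    (j : Fin n) : insM Ψ (embI n r i) j = Ψ i j := by
  unfold insM
  rw [← splitE_inl, Equiv.symm_apply_apply]
  rfl

lemma insM_mid {n r : ℕ} (Ψ : Matrix (Fin (n + 2*r)) (Fin n) (OC E)) (j k : Fin n) :
    insM Ψ (midI n r j) k = 0 := by
  unfold insM
  rw [← splitE_inr, Equiv.symm_apply_apply]
  rfl

lemma delM_insM {n r : ℕ} (Ψ : Matrix (Fin (n + 2*r)) (Fin n) (OC E)) :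
    delM (insM Ψ) = Ψ :=
  funext fun i => funext fun j => insM_emb Ψ i j

lemma gram_split {n r : ℕ} (Φ : Matrix (Fin (2*n + 2*r)) (Fin n) (OC E)) (a b : Fin n) :
    gramO E (gramM E n r) Φ a b
      = gramO E ((uf E) • (1 : Matrix (Fin (n + 2*r)) (Fin (n + 2*r)) E)) (delM Φ) a b
        + ∑ j : Fin n, (Φ (midI n r j) a : E) * cj ((Φ (midI n r j) b : E)) := by
  rw [gramM_eq, gramO_diagonal, gramO_smul_one,
    sum_split (f := fun i => (Φ i a : E) * dvF E n r i * cj ((Φ i b : E)))]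
  congr 1
  · refine Finset.sum_congr rfl fun i _ => ?_
    rw [dvF_emb]
    rfl
  · refine Finset.sum_congr rfl fun j _ => ?_
    rw [dvF_mid, mul_one]

lemma main {n r : ℕ} (d : ℕ) (hd : 1 ≤ d) (B₁ : Matrix (Fin n) (Fin n) E) :
    Nat.card ((fun Φ => Quot.mk (congModO E d) Φ) ''
      {Φ : Matrix (Fin (2*n + 2*r)) (Fin n) (OC E) |
        congMod E d (gramO E (gramM E n r) Φ) (uf E • B₁)
        ∧ (∀ j : Fin n, colE E Φ j ∈ piDual E (gramM E n r))
        ∧ ∀ (k : Fin n) (i : Fin (2*n + 2*r)), n ≤ (i : ℕ) → (i : ℕ) < 2*n →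
            inO ((gramV E (gramM E n r) (colE E Φ k) (Pi.single i 1)) / (uf E) ^ d)})
    = Nat.card ((fun Ψ => Quot.mk (congModO E d) Ψ) ''
      {Ψ : Matrix (Fin (n + 2*r)) (Fin n) (OC E) |
        congMod E d (gramO E ((uf E) • (1 : Matrix (Fin (n + 2*r)) (Fin (n + 2*r)) E)) Ψ)
          (uf E • B₁)}) := by
  classical
  set SS : Set (Matrix (Fin (2*n + 2*r)) (Fin n) (OC E)) :=
    {Φ | congMod E d (gramO E (gramM E n r) Φ) (uf E • B₁)
      ∧ (∀ j : Fin n, colE E Φ j ∈ piDual E (gramM E n r))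
      ∧ ∀ (k : Fin n) (i : Fin (2*n + 2*r)), n ≤ (i : ℕ) → (i : ℕ) < 2*n →
          inO ((gramV E (gramM E n r) (colE E Φ k) (Pi.single i 1)) / (uf E) ^ d)} with hSS
  set TT : Set (Matrix (Fin (n + 2*r)) (Fin n) (OC E)) :=
    {Ψ | congMod E d (gramO E ((uf E) • (1 : Matrix (Fin (n + 2*r)) (Fin (n + 2*r)) E)) Ψ)
      (uf E • B₁)} with hTT
  -- middle entries of elements of SS are divisible by π^d
  have hmid : ∀ (Φ : Matrix (Fin (2*n + 2*r)) (Fin n) (OC E)),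
      (∀ (k : Fin n) (i : Fin (2*n + 2*r)), n ≤ (i : ℕ) → (i : ℕ) < 2*n →
        inO ((gramV E (gramM E n r) (colE E Φ k) (Pi.single i 1)) / (uf E) ^ d)) →
      ∀ (j k : Fin n), inO ((Φ (midI n r j) k : E) / (uf E) ^ d) := by
    intro Φ h3 j k
    have hj := j.isLt
    have h := h3 k (midI n r j) (by dsimp only [midI]; omega) (by dsimp only [midI]; omega)
    rw [gramM_eq, gramV_single, dvF_mid, mul_one] at h
    exact h
  -- the deleted matrix satisfies the TT-congruence
  have hgramT : ∀ Φ ∈ SS, delM Φ ∈ TT := by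
    intro Φ hΦ a b
    have h1 := hΦ.1 a b
    have hsum : inO ((∑ j : Fin n,
        (Φ (midI n r j) a : E) * cj ((Φ (midI n r j) b : E))) / (uf E) ^ d) := by
      rw [Finset.sum_div]
      refine inO_sum _ _ fun j _ => ?_
      rw [mul_div_right_comm]
      exact inO_mul (hmid Φ hΦ.2.2 j a) (inO_cj (inO_coe _))
    have heq : (gramO E ((uf E) • (1 : Matrix (Fin (n + 2*r)) (Fin (n + 2*r)) E)) (delM Φ) a b
          - (uf E • B₁) a b) / (uf E) ^ d
        = (gramO E (gramM E n r) Φ a b - (uf E • B₁) a b) / (uf E) ^ d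
          - (∑ j : Fin n, (Φ (midI n r j) a : E) * cj ((Φ (midI n r j) b : E))) / (uf E) ^ d := by
      rw [gram_split Φ a b]
      ring
    show inO _
    rw [heq]
    exact inO_sub h1 hsum
  -- insertion lands in SS
  have hins : ∀ Ψ ∈ TT, insM Ψ ∈ SS := by
    intro Ψ hΨ
    refine ⟨?_, ?_, ?_⟩
    · intro a b
      have hz : (∑ j : Fin n,
          (insM Ψ (midI n r j) a : E) * cj ((insM Ψ (midI n r j) b : E))) = 0 := by
        refine Finset.sum_eq_zero fun j _ => ?_
        rw [insM_mid]
        simp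
      show inO _
      rw [gram_split (insM Ψ) a b, hz, add_zero, delM_insM]
      exact hΨ a b
    · intro k
      refine ⟨(uf E)⁻¹ • colE E (insM Ψ) k, ?_, ?_⟩
      · intro y hy
        rw [gramM_eq, gramV_diagonal]
        refine inO_sum _ _ fun a _ => ?_
        rcases hsplit : (splitE n r).symm a with i | j
        · have ha : a = embI n r i := by
            rw [← splitE_inl, ← hsplit, Equiv.apply_symm_apply]
          rw [ha, dvF_emb]
          have hz : ((uf E)⁻¹ • colE E (insM Ψ) k) (embI n r i) * uf E
              = colE E (insM Ψ) k (embI n r i) := by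
            rw [Pi.smul_apply, smul_eq_mul]
            rw [mul_comm, ← mul_assoc, mul_inv_cancel₀ uf_ne, one_mul]
          rw [hz]
          exact inO_mul (inO_coe _) (inO_cj (hy _))
        · have ha : a = midI n r j := by
            rw [← splitE_inr, ← hsplit, Equiv.apply_symm_apply]
          have hz : colE E (insM Ψ) k (midI n r j) = 0 := by
            show ((insM Ψ (midI n r j) k : E)) = 0
            rw [insM_mid]
            simp
          rw [ha, Pi.smul_apply, hz]
          simpa using (inO_zero : inO (0 : E))
      · rw [smul_smul, mul_inv_cancel₀ uf_ne, one_smul]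
    · intro k i hi1 hi2
      rw [gramM_eq, gramV_single]
      have hieq : i = midI n r ⟨(i : ℕ) - n, by omega⟩ := Fin.ext (by dsimp only [midI]; omega)
      rw [hieq, dvF_mid]
      have hz : colE E (insM Ψ) k (midI n r ⟨(i : ℕ) - n, by omega⟩) = 0 := by
        show ((insM Ψ (midI n r _) k : E)) = 0
        rw [insM_mid]
        simp
      rw [hz]
      simpa using (inO_zero : inO (0 : E))
  -- the map on quotients
  let Fq : Quot (congModO E d (a := 2*n + 2*r) (b := n))
      → Quot (congModO E d (a := n + 2*r) (b := n)) :=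
    Quot.lift (fun Φ => Quot.mk (congModO E d) (delM Φ))
      (fun A B h => Quot.sound (fun i j => h (embI n r i) j))
  have hBij : Set.BijOn Fq ((fun Φ => Quot.mk (congModO E d) Φ) '' SS)
      ((fun Ψ => Quot.mk (congModO E d) Ψ) '' TT) := by
    refine ⟨?_, ?_, ?_⟩
    · rintro q ⟨Φ, hΦ, rfl⟩
      exact ⟨delM Φ, hgramT Φ hΦ, rfl⟩
    · rintro q1 ⟨Φ1, hΦ1, rfl⟩ q2 ⟨Φ2, hΦ2, rfl⟩ h
      have h' : congModO E d (delM Φ1) (delM Φ2) := (quot_mk_eq_iff d _ _).mp h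
      refine (quot_mk_eq_iff d _ _).mpr fun i k => ?_
      rcases hsplit : (splitE n r).symm i with a | b
      · have hia : i = embI n r a := by
          rw [← splitE_inl, ← hsplit, Equiv.apply_symm_apply]
        rw [hia]
        exact h' a k
      · have hib : i = midI n r b := by
          rw [← splitE_inr, ← hsplit, Equiv.apply_symm_apply]
        rw [hib, sub_div]
        exact inO_sub (hmid Φ1 hΦ1.2.2 b k) (hmid Φ2 hΦ2.2.2 b k)
    · rintro q ⟨Ψ, hΨ, rfl⟩
      refine ⟨Quot.mk _ (insM Ψ), ⟨insM Ψ, hins Ψ hΨ, rfl⟩, ?_⟩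
      show Quot.mk _ (delM (insM Ψ)) = Quot.mk _ Ψ
      rw [delM_insM]
  exact Nat.card_congr (Set.BijOn.equiv Fq hBij)

end S11

end Stmt11Aux
open KR in
/-- Lemma 3.19: for `d` sufficiently large,
`|{φ₁ ∈ J_d(L₁,M) : ⟨φ₁(L₁), N⟩ ≡ 0 mod π^d}| = |I_d(L₁, N^⊥)|`, where
`M` has Gram matrix `diag(π 1_n, 1_n, π 1_{2r})`, `L₁` has Gram matrix `π B₁`,
`N = span(v_{n+1},…,v_{2n})` and `N^⊥` has Gram matrix `π 1_{n+2r}`. -/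
theorem statement11 (E : Type) [KRSetting E] (n r : ℕ) (hn : 0 < n)
    (B₁ : Matrix (Fin n) (Fin n) E) (hB₁ : inX B₁) (hInt : intMat (uf E • B₁)) :
    ∃ D : ℕ, ∀ d : ℕ, D ≤ d →
      Nat.card ((fun Φ => Quot.mk (congModO E d) Φ) ''
        {Φ : Matrix (Fin (2*n + 2*r)) (Fin n) (OC E) |
          congMod E d (gramO E (gramM E n r) Φ) (uf E • B₁)
          ∧ (∀ j : Fin n, colE E Φ j ∈ piDual E (gramM E n r))
          ∧ ∀ (k : Fin n) (i : Fin (2*n + 2*r)), n ≤ (i : ℕ) → (i : ℕ) < 2*n →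
              inO ((gramV E (gramM E n r) (colE E Φ k) (Pi.single i 1)) / (uf E) ^ d)})
      = IcountL E d (uf E • (1 : Matrix (Fin (n + 2*r)) (Fin (n + 2*r)) E)) (uf E • B₁) :=
  ⟨1, fun d hd => S11.main d hd B₁⟩
end
end
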